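/- arXiv:1712.02302 — 10 statements merged into one kernel-verified Lean document; each statement's English description precedes it below -/
import Mathlib

section
/- Let D be a finite-dimensional algebra over a field, and let A, B, C be linear subspaces of D with A·B ⊆ C. Then the slice rank of the multiplication tensor of D is at most codim A + codim B + dim C. -/
/-- `HasSliceRankLE K F r` : the tensor `F` can be written as a sum of `r` slice terms. -/
def HasSliceRankLE {X Y Z : Type*} (K : Type*) [Field K]
    (F : X → Y → Z → K) (r : ℕ) : Prop :=
  ∃ T : Fin r → (X → Y → Z → K),
    (∀ i, (∃ (f : X → K) (g : Y → Z → K), T i = fun x y z => f x * g y z) ∨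
          (∃ (f : Y → K) (g : X → Z → K), T i = fun x y z => f y * g x z) ∨
          (∃ (f : Z → K) (g : X → Y → K), T i = fun x y z => f z * g x y)) ∧
    ∀ x y z, F x y z = ∑ i, T i x y z

/-- The slice rank of a 3-tensor. -/
noncomputable def sliceRank {X Y Z : Type*} (K : Type*) [Field K]
    (F : X → Y → Z → K) : ℕ :=
  sInf {r | HasSliceRankLE K F r}

lemma hasSliceRankLE_congr {X Y Z K : Type*} [Field K] {F G : X → Y → Z → K} {r : ℕ}
    (hFG : ∀ x y z, F x y z = G x y z) (hG : HasSliceRankLE K G r) :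
    HasSliceRankLE K F r := by
  obtain ⟨T, hT, hs⟩ := hG
  exact ⟨T, hT, fun x y z => (hFG x y z).trans (hs x y z)⟩

lemma hasSliceRankLE_add {X Y Z K : Type*} [Field K] {F G : X → Y → Z → K} {r s : ℕ}
    (hF : HasSliceRankLE K F r) (hG : HasSliceRankLE K G s) :
    HasSliceRankLE K (fun x y z => F x y z + G x y z) (r + s) := by
  obtain ⟨T, hT, hTs⟩ := hF
  obtain ⟨S, hS, hSs⟩ := hG
  refine ⟨fun i => Sum.elim T S (finSumFinEquiv.symm i), ?_, ?_⟩
  · intro i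
    rcases hi : finSumFinEquiv.symm i with j | j
    · simpa [hi] using hT j
    · simpa [hi] using hS j
  · intro x y z
    show F x y z + G x y z = _
    rw [hTs, hSs]
    have key : ∑ i : Fin (r + s), Sum.elim T S (finSumFinEquiv.symm i) x y z =
        ∑ j : Fin r ⊕ Fin s, Sum.elim T S j x y z :=
      Fintype.sum_equiv finSumFinEquiv.symm _ _ (fun _ => rfl)
    rw [key, Fintype.sum_sum_type]
    simp

lemma hasSliceRankLE_sum1 {X Y Z K : Type*} [Field K] (n : ℕ)
    (f : Fin n → X → K) (g : Fin n → Y → Z → K) :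
    HasSliceRankLE K (fun x y z => ∑ u, f u x * g u y z) n :=
  ⟨fun u x y z => f u x * g u y z, fun u => Or.inl ⟨f u, g u, rfl⟩, fun _ _ _ => rfl⟩

lemma hasSliceRankLE_sum2 {X Y Z K : Type*} [Field K] (n : ℕ)
    (f : Fin n → Y → K) (g : Fin n → X → Z → K) :
    HasSliceRankLE K (fun x y z => ∑ u, f u y * g u x z) n :=
  ⟨fun u x y z => f u y * g u x z, fun u => Or.inr (Or.inl ⟨f u, g u, rfl⟩),
    fun _ _ _ => rfl⟩

lemma hasSliceRankLE_sum3 {X Y Z K : Type*} [Field K] (n : ℕ)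
    (f : Fin n → Z → K) (g : Fin n → X → Y → K) :
    HasSliceRankLE K (fun x y z => ∑ u, f u z * g u x y) n :=
  ⟨fun u x y z => f u z * g u x y, fun u => Or.inr (Or.inr ⟨f u, g u, rfl⟩),
    fun _ _ _ => rfl⟩

/-- Expansion of an element of a submodule in a basis of the submodule,
as an element of the ambient module. -/
lemma submodule_coe_expand {K D : Type*} [Field K] [AddCommGroup D] [Module K D]
    {W : Submodule K D} {n : ℕ} (c : Module.Basis (Fin n) K W) (w : W) :
    (w : D) = ∑ u, c.repr w u • (c u : D) := by
  conv_lhs => rw [← c.sum_repr w]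
  push_cast
  rfl

set_option maxHeartbeats 1000000 in
open Module in
/-- If `A·B ⊆ C` for subspaces of a finite-dimensional algebra `D`, then the
slice rank of the multiplication tensor of `D` (in any basis) is at most
`codim A + codim B + dim C`. -/
theorem sliceRank_mul_tensor_le_of_mul_subset {K : Type*} [Field K]
    {D : Type*} [Ring D] [Algebra K D] [FiniteDimensional K D]
    {ι : Type*} [Fintype ι] (b : Basis ι K D)
    (A B C : Submodule K D) (h : ∀ a ∈ A, ∀ x ∈ B, a * x ∈ C) :
    sliceRank K (fun i j k : ι => b.repr (b i * b j) k) ≤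
      (finrank K D - finrank K A) + (finrank K D - finrank K B) + finrank K C := by
  classical
  obtain ⟨A', hA'⟩ := Submodule.exists_isCompl A
  obtain ⟨B', hB'⟩ := Submodule.exists_isCompl B
  have hrA : finrank K A + finrank K A' = finrank K D :=
    Submodule.finrank_add_eq_of_isCompl hA'
  have hrB : finrank K B + finrank K B' = finrank K D :=
    Submodule.finrank_add_eq_of_isCompl hB'
  set pA : D →ₗ[K] A := A.linearProjOfIsCompl A' hA' with hpA
  set pA' : D →ₗ[K] A' := A'.linearProjOfIsCompl A hA'.symm with hpA'
  set pB : D →ₗ[K] B := B.linearProjOfIsCompl B' hB' with hpB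
  set pB' : D →ₗ[K] B' := B'.linearProjOfIsCompl B hB'.symm with hpB'
  have hsplitA : ∀ x : D, (pA x : D) + (pA' x : D) = x := fun x =>
    Submodule.projection_add_projection_eq_self hA' x
  have hsplitB : ∀ x : D, (pB x : D) + (pB' x : D) = x := fun x =>
    Submodule.projection_add_projection_eq_self hB' x
  set cA' : Basis (Fin (finrank K A')) K A' := finBasis K A'
  set cB' : Basis (Fin (finrank K B')) K B' := finBasis K B'
  set cC : Basis (Fin (finrank K C)) K C := finBasis K C
  -- decomposition of the tensor into three parts
  have hdec : ∀ i j k : ι, b.repr (b i * b j) k =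
      b.repr ((pA' (b i) : D) * b j) k
      + b.repr ((pA (b i) : D) * (pB' (b j) : D)) k
      + b.repr ((pA (b i) : D) * (pB (b j) : D)) k := by
    intro i j k
    have e1 : b i * b j = (pA (b i) : D) * b j + (pA' (b i) : D) * b j := by
      rw [← add_mul, hsplitA]
    have e2 : (pA (b i) : D) * b j =
        (pA (b i) : D) * (pB (b j) : D) + (pA (b i) : D) * (pB' (b j) : D) := by
      rw [← mul_add, hsplitB]
    have : b i * b j = (pA' (b i) : D) * b j
        + (pA (b i) : D) * (pB' (b j) : D)
        + (pA (b i) : D) * (pB (b j) : D) := by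
      rw [e1, e2]; abel
    rw [this, map_add, map_add]
    simp
  -- the three parts are sums of slice terms
  have h1 : ∀ i j k : ι, b.repr ((pA' (b i) : D) * b j) k =
      ∑ u, cA'.repr (pA' (b i)) u * b.repr ((cA' u : D) * b j) k := by
    intro i j k
    rw [submodule_coe_expand cA' (pA' (b i)), Finset.sum_mul, map_sum]
    simp [smul_mul_assoc]
  have h2 : ∀ i j k : ι, b.repr ((pA (b i) : D) * (pB' (b j) : D)) k =
      ∑ u, cB'.repr (pB' (b j)) u * b.repr ((pA (b i) : D) * (cB' u : D)) k := by
    intro i j k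
    rw [submodule_coe_expand cB' (pB' (b j)), Finset.mul_sum, map_sum]
    simp [mul_smul_comm]
  have h3 : ∀ i j k : ι, b.repr ((pA (b i) : D) * (pB (b j) : D)) k =
      ∑ u, b.repr ((cC u : D)) k *
        cC.repr ⟨(pA (b i) : D) * (pB (b j) : D), h _ (pA (b i)).2 _ (pB (b j)).2⟩ u := by
    intro i j k
    have expand := submodule_coe_expand cC
      ⟨(pA (b i) : D) * (pB (b j) : D), h _ (pA (b i)).2 _ (pB (b j)).2⟩
    have key : b.repr ((pA (b i) : D) * (pB (b j) : D)) k =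
        b.repr (∑ u, cC.repr
          ⟨(pA (b i) : D) * (pB (b j) : D), h _ (pA (b i)).2 _ (pB (b j)).2⟩ u
            • (cC u : D)) k := by
      rw [← expand]
    rw [key, map_sum]
    simp only [map_smul, Finsupp.finset_sum_apply, Finsupp.smul_apply, smul_eq_mul]
    exact Finset.sum_congr rfl fun u _ => mul_comm _ _
  have hmem : HasSliceRankLE K (fun i j k : ι => b.repr (b i * b j) k)
      (finrank K A' + finrank K B' + finrank K C) := by
    refine hasSliceRankLE_congr (fun i j k => ?_)
      (hasSliceRankLE_add (hasSliceRankLE_add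
        (hasSliceRankLE_sum1 (finrank K A')
          (fun u i => cA'.repr (pA' (b i)) u)
          (fun u j k => b.repr ((cA' u : D) * b j) k))
        (hasSliceRankLE_sum2 (finrank K B')
          (fun u j => cB'.repr (pB' (b j)) u)
          (fun u i k => b.repr ((pA (b i) : D) * (cB' u : D)) k)))
        (hasSliceRankLE_sum3 (finrank K C)
          (fun u k => b.repr ((cC u : D)) k)
          (fun u i j =>
            cC.repr ⟨(pA (b i) : D) * (pB (b j) : D), h _ (pA (b i)).2 _ (pB (b j)).2⟩ u)))
    rw [hdec i j k, h1 i j k, h2 i j k, h3 i j k]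
  have hle : sliceRank K (fun i j k : ι => b.repr (b i * b j) k) ≤
      finrank K A' + finrank K B' + finrank K C := Nat.sInf_le hmem
  have e1 : finrank K A' = finrank K D - finrank K A := by omega
  have e2 : finrank K B' = finrank K D - finrank K B := by omega
  rwa [e1, e2] at hle
end

section
/- If a finite group G contains a multiplicative matching of cardinality m, then the slice rank of the multiplication tensor of G over any field is at least m. -/
open Module


open Module

lemma exists_mem_support_ge {K : Type*} [Field K] {ι : Type*} [Fintype ι] [DecidableEq ι]
    (W : Submodule K (ι → K)) :
    ∃ x ∈ W, ∃ S : Finset ι, finrank K W ≤ S.card ∧ ∀ j ∈ S, x j ≠ 0 := by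
  classical
  set P : Set ℕ := {n | ∃ x ∈ W, (Finset.univ.filter (fun j => x j ≠ 0)).card = n} with hP
  have hne : P.Nonempty := ⟨_, 0, W.zero_mem, rfl⟩
  have hbdd : BddAbove P := by
    refine ⟨Fintype.card ι, fun n hn => ?_⟩
    obtain ⟨x, -, rfl⟩ := hn
    exact (Finset.card_filter_le _ _).trans (by simp)
  obtain ⟨x, hxW, hxcard⟩ := Nat.sSup_mem hne hbdd
  set N := sSup P with hN
  refine ⟨x, hxW, Finset.univ.filter (fun j => x j ≠ 0), ?_, fun j hj => by simpa using hj⟩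
  rw [hxcard]
  by_contra hlt
  push_neg at hlt
  set S := (Finset.univ.filter (fun j => x j ≠ 0)) with hS
  -- the projection to coordinates in S
  let π : W →ₗ[K] (S → K) :=
    LinearMap.pi fun j : S => (LinearMap.proj (j : ι)).comp W.subtype
  have hnotinj : ¬ Function.Injective π := by
    intro hinj
    have := LinearMap.finrank_le_finrank_of_injective hinj
    rw [Module.finrank_pi K, Fintype.card_coe] at this
    omega
  rw [← LinearMap.ker_eq_bot] at hnotinj
  obtain ⟨⟨y, hyW⟩, hyker, hyne⟩ := Submodule.exists_mem_ne_zero_of_ne_bot hnotinj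
  have hyS : ∀ j ∈ S, y j = 0 := by
    intro j hj
    have := congrFun hyker ⟨j, hj⟩
    simpa [π] using this
  have hy0 : y ≠ 0 := by simpa using hyne
  obtain ⟨p, hp⟩ : ∃ p, y p ≠ 0 := by
    by_contra hc; push_neg at hc; exact hy0 (funext hc)
  have hpS : p ∉ S := fun h => hp (hyS p h)
  have hxp : x p = 0 := by
    by_contra h; exact hpS (by simp [hS, h])
  -- x + y has strictly larger support
  have hsub : insert p S ⊆ Finset.univ.filter (fun j => (x + y) j ≠ 0) := by
    intro j hj
    rcases Finset.mem_insert.mp hj with rfl | hjS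
    · simp [hxp, hp]
    · have hxj : x j ≠ 0 := by simpa [hS] using hjS
      simp [hyS j hjS, hxj]
  have hcard : N + 1 ≤ (Finset.univ.filter (fun j => (x + y) j ≠ 0)).card := by
    calc N + 1 = S.card + 1 := by rw [hxcard]
    _ = (insert p S).card := (Finset.card_insert_of_notMem hpS).symm
    _ ≤ _ := Finset.card_le_card hsub
  have hle : (Finset.univ.filter (fun j => (x + y) j ≠ 0)).card ≤ N :=
    le_csSup hbdd ⟨x + y, W.add_mem hxW hyW, rfl⟩
  omega

section MatrixRank

variable {K : Type*} [Field K] {n : Type*} [Fintype n] [DecidableEq n]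

lemma matrix_rank_add_le (A B : Matrix n n K) : (A + B).rank ≤ A.rank + B.rank := by
  classical
  have hle : LinearMap.range (A + B).mulVecLin ≤
      LinearMap.range A.mulVecLin ⊔ LinearMap.range B.mulVecLin := by
    rintro _ ⟨v, rfl⟩
    rw [Matrix.mulVecLin_add, LinearMap.add_apply]
    exact Submodule.add_mem_sup ⟨v, rfl⟩ ⟨v, rfl⟩
  calc (A + B).rank ≤ finrank K ↥(LinearMap.range A.mulVecLin ⊔ LinearMap.range B.mulVecLin) :=
        Submodule.finrank_mono hle
    _ ≤ A.rank + B.rank := Submodule.finrank_add_le_finrank_add_finrank _ _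

lemma matrix_rank_sum_le {ι : Type*} (s : Finset ι) (M : ι → Matrix n n K) :
    (∑ i ∈ s, M i).rank ≤ ∑ i ∈ s, (M i).rank := by
  classical
  induction s using Finset.induction_on with
  | empty => simp [Matrix.rank_zero]
  | insert _ _ h ih =>
    rw [Finset.sum_insert h, Finset.sum_insert h]
    exact (matrix_rank_add_le _ _).trans (add_le_add_right ih _)

lemma matrix_rank_vecMulVec_le (w v : n → K) : (Matrix.vecMulVec w v).rank ≤ 1 := by
  classical
  have hle : LinearMap.range (Matrix.vecMulVec w v).mulVecLin ≤ Submodule.span K {w} := by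
    rintro _ ⟨x, rfl⟩
    have : (Matrix.vecMulVec w v).mulVec x = (∑ j, v j * x j) • w := by
      ext i
      simp [Matrix.mulVec, Matrix.vecMulVec_apply, dotProduct, Finset.mul_sum,
        Finset.sum_mul, mul_assoc, mul_comm, mul_left_comm]
    rw [Matrix.mulVecLin_apply, this]
    exact Submodule.smul_mem _ _ (Submodule.mem_span_singleton_self w)
  calc (Matrix.vecMulVec w v).rank ≤ finrank K ↥(Submodule.span K ({w} : Set (n → K))) :=
        Submodule.finrank_mono hle
    _ ≤ 1 := by
        refine (finrank_span_le_card _).trans ?_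
        simp

end MatrixRank

lemma le_of_hasSliceRankLE_diag {K : Type*} [Field K] {m r : ℕ}
    (hsr : HasSliceRankLE K (fun x y z : Fin m => if x = y ∧ y = z then (1:K) else 0) r) :
    m ≤ r := by
  classical
  obtain ⟨T, hslice, hsum⟩ := hsr
  set C : Finset (Fin r) := Finset.univ.filter (fun i =>
    ¬ (∃ (f : Fin m → K) (g : Fin m → Fin m → K), T i = fun x y z => f x * g y z) ∧
    ¬ (∃ (f : Fin m → K) (g : Fin m → Fin m → K), T i = fun x y z => f y * g x z)) with hC
  have hCform : ∀ i ∈ C, ∃ (f : Fin m → K) (g : Fin m → Fin m → K),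
      T i = fun x y z => f z * g x y := by
    intro i hi
    rw [hC, Finset.mem_filter] at hi
    rcases hslice i with h1 | h2 | h3
    · exact absurd h1 hi.2.1
    · exact absurd h2 hi.2.2
    · exact h3
  choose f g hfg using hCform
  set Φ : (Fin m → K) →ₗ[K] (↥C → K) :=
    LinearMap.pi (fun i : C => ∑ z, f i i.2 z • LinearMap.proj z) with hΦ
  have hrk : finrank K (LinearMap.range Φ) + finrank K (LinearMap.ker Φ) = m := by
    have := LinearMap.finrank_range_add_finrank_ker Φ
    simpa [Module.finrank_pi] using this
  have hrange : finrank K (LinearMap.range Φ) ≤ C.card := by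
    have := Submodule.finrank_le (LinearMap.range Φ)
    simpa [Module.finrank_pi] using this
  obtain ⟨h, hhW, S, hScard, hSne⟩ := exists_mem_support_ge (LinearMap.ker Φ)
  have hΦh : ∀ (i : Fin r) (hi : i ∈ C), ∑ z, f i hi z * h z = 0 := by
    intro i hi
    have := congrFun (LinearMap.mem_ker.mp hhW) ⟨i, hi⟩
    simpa [hΦ, LinearMap.pi_apply, LinearMap.sum_apply] using this
  set M : Fin r → Matrix (Fin m) (Fin m) K :=
    fun i => Matrix.of (fun x y => ∑ z, T i x y z * h z) with hM
  have hdiag : ∑ i, M i = Matrix.diagonal h := by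
    ext x y
    have h1 : (∑ i, M i) x y = ∑ z, (∑ i, T i x y z) * h z := by
      simp only [Matrix.sum_apply, hM, Matrix.of_apply, Finset.sum_mul]
      rw [Finset.sum_comm]
    rw [h1]
    have h2 : ∀ z, (∑ i, T i x y z) = if x = y ∧ y = z then (1:K) else 0 :=
      fun z => (hsum x y z).symm
    simp only [h2]
    by_cases hxy : x = y
    · subst hxy
      simp [Matrix.diagonal_apply_eq, Finset.sum_ite_eq]
    · simp [Matrix.diagonal_apply_ne _ hxy, hxy]
  have hbound : ∀ i, (M i).rank ≤ if i ∈ C then 0 else 1 := by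
    intro i
    by_cases hi : i ∈ C
    · rw [if_pos hi]
      have : M i = 0 := by
        ext x y
        have := hfg i hi
        simp only [hM, Matrix.of_apply, this]
        rw [show (∑ z, f i hi z * g i hi x y * h z)
            = (∑ z, f i hi z * h z) * g i hi x y by
          rw [Finset.sum_mul]; exact Finset.sum_congr rfl fun z _ => by ring]
        simp [hΦh i hi]
      rw [this, Matrix.rank_zero]
    · rw [if_neg hi]
      have hi' : (∃ (f : Fin m → K) (g : Fin m → Fin m → K), T i = fun x y z => f x * g y z)
          ∨ (∃ (f : Fin m → K) (g : Fin m → Fin m → K), T i = fun x y z => f y * g x z) := by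
        by_contra hcon
        rw [not_or] at hcon
        exact hi (by rw [hC]; simp only [Finset.mem_filter, Finset.mem_univ, true_and]
                     exact ⟨hcon.1, hcon.2⟩)
      rcases hi' with ⟨f', g', hfg'⟩ | ⟨f', g', hfg'⟩
      · have : M i = Matrix.vecMulVec f' (fun y => ∑ z, g' y z * h z) := by
          ext x y
          simp only [hM, Matrix.of_apply, hfg', Matrix.vecMulVec_apply, Finset.mul_sum]
          exact Finset.sum_congr rfl fun z _ => by ring
        rw [this]; exact matrix_rank_vecMulVec_le _ _
      · have : M i = Matrix.vecMulVec (fun x => ∑ z, g' x z * h z) f' := by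
          ext x y
          simp only [hM, Matrix.of_apply, hfg', Matrix.vecMulVec_apply, Finset.sum_mul]
          exact Finset.sum_congr rfl fun z _ => by ring
        rw [this]; exact matrix_rank_vecMulVec_le _ _
  have hsumrank : (∑ i, M i).rank ≤ ∑ i : Fin r, (if i ∈ C then 0 else 1) :=
    (matrix_rank_sum_le _ _).trans (Finset.sum_le_sum fun i _ => hbound i)
  have hcount : ∑ i : Fin r, (if i ∈ C then (0:ℕ) else 1) + C.card = r := by
    have h1 : ∑ i : Fin r, (if i ∈ C then (1:ℕ) else 0) = C.card := by
      simp [Finset.sum_ite_mem]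
    have h2 : ∑ i : Fin r, ((if i ∈ C then (0:ℕ) else 1) + (if i ∈ C then (1:ℕ) else 0)) = r := by
      have : ∀ i : Fin r, (if i ∈ C then (0:ℕ) else 1) + (if i ∈ C then (1:ℕ) else 0) = 1 := by
        intro i; by_cases hi : i ∈ C <;> simp [hi]
      simp [this]
    rw [Finset.sum_add_distrib, h1] at h2
    exact h2
  have hSrank : S.card ≤ (Matrix.diagonal h).rank := by
    rw [Matrix.rank_diagonal]
    have : S ⊆ Finset.univ.filter (fun j => h j ≠ 0) := fun j hj => by
      simp [hSne j hj]
    calc S.card ≤ (Finset.univ.filter (fun j => h j ≠ 0)).card := Finset.card_le_card this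
      _ = Fintype.card {i // h i ≠ 0} := by rw [Fintype.card_subtype]
  rw [← hdiag] at hSrank
  omega

/-- If a finite group `G` contains a multiplicative matching of cardinality
`m`, then the slice rank of the multiplication tensor of `G` over any field is
at least `m`. -/
theorem le_sliceRank_of_multiplicative_matching {K : Type*} [Field K]
    {G : Type*} [Group G] [Fintype G] [DecidableEq G] {m : ℕ}
    (s t u : Fin m → G)
    (hmatch : ∀ i j k, s i * t j * u k = 1 ↔ i = j ∧ j = k) :
    m ≤ sliceRank K (fun g h k : G => if g * h = k then (1 : K) else 0) := by
  classical
  refine le_csInf ⟨Fintype.card G, ?_⟩ ?_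
  · -- the multiplication tensor has slice rank at most |G|
    obtain ⟨e⟩ := Fintype.truncEquivFin G
    refine ⟨fun i => fun x y z =>
        (if x = e.symm i then 1 else 0) * (if (e.symm i) * y = z then 1 else 0),
      fun i => Or.inl ⟨_, _, rfl⟩, fun x y z => ?_⟩
    show (if x * y = z then (1:K) else 0) = _
    calc (if x * y = z then (1:K) else 0)
        = ∑ a : G, (if x = a then (1:K) else 0) * (if a * y = z then 1 else 0) := by
          rw [Finset.sum_eq_single x]
          · simp
          · intro b _ hb
            simp [Ne.symm hb]
          · simp
      _ = _ := (Equiv.sum_comp e.symm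
          (fun a => (if x = a then (1:K) else 0) * (if a * y = z then 1 else 0))).symm
  · rintro r ⟨T, hslice, hsum⟩
    apply le_of_hasSliceRankLE_diag (K := K)
    refine ⟨fun i x y z => T i (s x) (t y) ((u z)⁻¹), fun i => ?_, fun x y z => ?_⟩
    · rcases hslice i with ⟨f, g, hfg⟩ | ⟨f, g, hfg⟩ | ⟨f, g, hfg⟩
      · exact Or.inl ⟨fun x => f (s x), fun y z => g (t y) ((u z)⁻¹), by funext x y z; simp only [hfg]⟩
      · exact Or.inr (Or.inl ⟨fun y => f (t y), fun x z => g (s x) ((u z)⁻¹), by funext x y z; simp only [hfg]⟩)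
      · exact Or.inr (Or.inr ⟨fun z => f ((u z)⁻¹), fun x y => g (s x) (t y), by funext x y z; simp only [hfg]⟩)
    · rw [← hsum (s x) (t y) ((u z)⁻¹)]
      have hiff : (s x * t y = (u z)⁻¹) ↔ (x = y ∧ y = z) :=
        (mul_eq_one_iff_eq_inv).symm.trans (hmatch x y z)
      simp [hiff]
end

section
/- If S, T, U are subsets of a finite group G satisfying the triple product property and |G|/(|S||T||U|)^{2/3} ≥ k, where k is the number of conjugacy classes of G, then the inequality (|S||T||U|)^{ω/3} ≤ Σ_i d_i^ω holds for every real ω > 0, where d_1,...,d_k are the dimensions of the irreducible complex representations of G. -/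
open Finset

/-- If `S, T, U ⊆ G` satisfy the triple product property and
`|G| / (|S||T||U|)^{2/3} ≥ k`, where `k` is the number of conjugacy classes of
`G` and `d_1, …, d_k` are the dimensions of the irreducible complex
representations of `G` (characterized by: there are `k` of them, each positive,
and the sum of their squares is `|G|`), then `(|S||T||U|)^{ω/3} ≤ Σ_i d_i^ω`
for every real `ω > 0`. -/
theorem tpp_trivial_of_small_sets {G : Type*} [Group G] [Fintype G]
    (S T U : Finset G)
    (htpp : ∀ x₁ ∈ S, ∀ x₂ ∈ S, ∀ y₁ ∈ T, ∀ y₂ ∈ T, ∀ z₁ ∈ U, ∀ z₂ ∈ U,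
      (x₁ * x₂⁻¹) * (y₁ * y₂⁻¹) * (z₁ * z₂⁻¹) = 1 →
        x₁ = x₂ ∧ y₁ = y₂ ∧ z₁ = z₂)
    (k : ℕ) (hk : k = Nat.card (ConjClasses G))
    (d : Fin k → ℕ) (hd : ∀ i, 1 ≤ d i)
    (hsum : ∑ i, (d i) ^ 2 = Fintype.card G)
    (hsize : (k : ℝ) ≤
      (Fintype.card G : ℝ) / ((S.card * T.card * U.card : ℝ)) ^ ((2 : ℝ) / 3)) :
    ∀ ω : ℝ, 0 < ω →
      ((S.card * T.card * U.card : ℝ)) ^ (ω / 3) ≤ ∑ i, (d i : ℝ) ^ ω := by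
  intro w hw
  set N : ℝ := (S.card * T.card * U.card : ℝ) with hN
  have hN0 : 0 ≤ N := by positivity
  rcases eq_or_lt_of_le hN0 with h0 | hpos
  · rw [← h0, Real.zero_rpow (by positivity)]
    apply Finset.sum_nonneg
    intro i _
    exact Real.rpow_nonneg (by positivity) _
  · -- k is positive
    have hkpos : 0 < k := by
      rw [hk]
      exact Nat.card_pos
    -- there is i with |G|/k ≤ (d i)^2
    have hne : (Finset.univ : Finset (Fin k)).Nonempty := by
      simpa [Finset.univ_nonempty_iff] using Fin.pos_iff_nonempty.mp hkpos
    obtain ⟨i, hi⟩ : ∃ i : Fin k, (Fintype.card G : ℝ) / k ≤ ((d i : ℝ)) ^ (2 : ℕ) := by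
      by_contra hcon
      push_neg at hcon
      have hlt : (∑ i : Fin k, ((d i : ℝ)) ^ (2 : ℕ)) <
          ∑ _i : Fin k, (Fintype.card G : ℝ) / k :=
        Finset.sum_lt_sum_of_nonempty hne (fun i _ => hcon i)
      have hsum' : (∑ i : Fin k, ((d i : ℝ)) ^ (2 : ℕ)) = (Fintype.card G : ℝ) := by
        rw [← hsum]; push_cast; ring
      rw [hsum', Finset.sum_const, Finset.card_univ, Fintype.card_fin,
        nsmul_eq_mul] at hlt
      have : (k : ℝ) * ((Fintype.card G : ℝ) / k) = (Fintype.card G : ℝ) := by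
        field_simp
      rw [this] at hlt
      exact lt_irrefl _ hlt
    -- N^(2/3) ≤ (d i)^2
    have hNpow : (0:ℝ) < N ^ ((2:ℝ)/3) := Real.rpow_pos_of_pos hpos _
    have h1 : N ^ ((2:ℝ)/3) ≤ (Fintype.card G : ℝ) / k := by
      rw [le_div_iff₀ (by exact_mod_cast hkpos)]
      calc N ^ ((2:ℝ)/3) * k = (k : ℝ) * N ^ ((2:ℝ)/3) := by ring
        _ ≤ ((Fintype.card G : ℝ) / N ^ ((2:ℝ)/3)) * N ^ ((2:ℝ)/3) := by
            apply mul_le_mul_of_nonneg_right hsize hNpow.le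
        _ = (Fintype.card G : ℝ) := by field_simp
    have h2 : N ^ ((2:ℝ)/3) ≤ ((d i : ℝ)) ^ (2 : ℕ) := h1.trans hi
    -- N^(1/3) ≤ d i
    have hdpos : (0:ℝ) ≤ (d i : ℝ) := by positivity
    have h3 : N ^ ((1:ℝ)/3) ≤ (d i : ℝ) := by
      have := Real.rpow_le_rpow hNpow.le h2 (by norm_num : (0:ℝ) ≤ 1/2)
      rw [← Real.rpow_natCast ((d i : ℝ)) 2, ← Real.rpow_mul hN0,
        ← Real.rpow_mul hdpos] at this
      norm_num at this
      simpa using this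
    -- conclude
    have h4 : N ^ (w/3) ≤ (d i : ℝ) ^ w := by
      have : N ^ (w/3) = (N ^ ((1:ℝ)/3)) ^ w := by
        rw [← Real.rpow_mul hN0]; ring_nf
      rw [this]
      exact Real.rpow_le_rpow (Real.rpow_nonneg hN0 _) h3 hw.le
    refine h4.trans ?_
    exact Finset.single_le_sum (f := fun j => (d j : ℝ) ^ w)
      (fun j _ => Real.rpow_nonneg (by positivity) _) (Finset.mem_univ i)
end

section
/- For every integer m ≥ 1, the cyclic group Z/mZ contains a border multiplicative matching of cardinality at least ⌈m/2⌉. -/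
/-- The cyclic group `Z/mZ` (written additively) contains a border
multiplicative matching of cardinality at least `⌈m/2⌉`. -/
theorem zmod_border_matching (m : ℕ) (hm : 1 ≤ m) :
    ∃ N : ℕ, (m + 1) / 2 ≤ N ∧
      ∃ (s t u : Fin N → ZMod m) (a b c : Fin N → ℤ),
        (∀ i j k, (s i + t j + u k = 0 ∧ a i + b j + c k = 0) ↔ (i = j ∧ j = k)) ∧
        (∀ i j k, s i + t j + u k = 0 → 0 ≤ a i + b j + c k) := by
  set N := (m + 1) / 2 with hN
  refine ⟨N, le_refl _, fun i => ((i.val : ℤ) : ZMod m),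
    fun j => ((j.val : ℤ) : ZMod m), fun k => ((-2 * (k.val : ℤ)) : ZMod m),
    fun i => (i.val : ℤ)^2, fun j => (j.val : ℤ)^2, fun k => -2 * (k.val : ℤ)^2, ?_, ?_⟩
  · -- key: the ZMod equation is equivalent to an integer equation
    have key : ∀ i j k : Fin N,
        (((i.val : ℤ) : ZMod m) + ((j.val : ℤ) : ZMod m) + ((-2 * (k.val : ℤ)) : ZMod m) = 0)
        ↔ (i.val : ℤ) + j.val = 2 * k.val := by
      intro i j k
      have hi := i.isLt; have hj := j.isLt; have hk := k.isLt
      constructor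
      · intro h
        have h2 : (((i.val : ℤ) + j.val + (-2 * k.val) : ℤ) : ZMod m) = 0 := by
          push_cast; push_cast at h; linear_combination h
        have hd := (ZMod.intCast_zmod_eq_zero_iff_dvd _ m).mp h2
        have habs : |(i.val : ℤ) + j.val + (-2 * k.val)| < m := by
          rw [abs_lt]; constructor <;> push_cast <;> omega
        have := Int.eq_zero_of_abs_lt_dvd hd habs
        omega
      · intro h
        have h2 : ((i.val : ℤ) + j.val + (-2 * k.val) : ℤ) = 0 := by omega
        push_cast
        have : (((i.val : ℤ) + j.val + (-2 * k.val) : ℤ) : ZMod m) = 0 := by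
          rw [h2]; simp
        push_cast at this; linear_combination this
    intro i j k
    rw [key i j k]
    constructor
    · rintro ⟨h1, h2⟩
      have h2' : (i.val : ℤ)^2 + (j.val : ℤ)^2 + (-2) * (k.val : ℤ)^2 = 0 := by
        have := h2; simp only at this; linarith
      have hij : (i.val : ℤ) = j.val := by nlinarith [sq_nonneg ((i.val : ℤ) - j.val)]
      have hik : (i.val : ℤ) = k.val := by omega
      constructor
      · exact Fin.ext (by exact_mod_cast hij)
      · exact Fin.ext (by omega)
    · rintro ⟨rfl, rfl⟩
      constructor
      · ring
      · ring
  · intro i j k h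
    have key : (i.val : ℤ) + j.val = 2 * k.val := by
      have hi := i.isLt; have hj := j.isLt; have hk := k.isLt
      have h2 : (((i.val : ℤ) + j.val + (-2 * k.val) : ℤ) : ZMod m) = 0 := by
        push_cast; push_cast at h; linear_combination h
      have hd := (ZMod.intCast_zmod_eq_zero_iff_dvd _ m).mp h2
      have habs : |(i.val : ℤ) + j.val + (-2 * k.val)| < m := by
        rw [abs_lt]; constructor <;> push_cast <;> omega
      have := Int.eq_zero_of_abs_lt_dvd hd habs
      omega
    show (0:ℤ) ≤ (i.val : ℤ)^2 + (j.val : ℤ)^2 + (-2) * (k.val : ℤ)^2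
    nlinarith [sq_nonneg ((i.val : ℤ) - j.val)]
end

section
/- Let 1 → N → G → G/N → 1 be a short exact sequence of groups. If N contains a multiplicative matching of cardinality m and G/N contains a multiplicative matching of cardinality m', then G contains a multiplicative matching of cardinality m·m'. -/
/-- If a normal subgroup `N` of `G` contains a multiplicative matching of
cardinality `m` and the quotient `G/N` contains a multiplicative matching of
cardinality `m'`, then `G` contains one of cardinality `m·m'`. -/
theorem matching_of_extension {G : Type*} [Group G] (N : Subgroup G) [N.Normal]
    {m m' : ℕ} (s t u : Fin m → N)
    (hN : ∀ i j k, (s i : G) * t j * u k = 1 ↔ i = j ∧ j = k)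
    (x y z : Fin m' → G ⧸ N)
    (hQ : ∀ i j k, x i * y j * z k = 1 ↔ i = j ∧ j = k) :
    ∃ S T U : Fin (m * m') → G,
      ∀ i j k, S i * T j * U k = 1 ↔ i = j ∧ j = k := by
  classical
  set X : Fin m' → G := fun b => (x b).out with hXdef
  set Y : Fin m' → G := fun b => (y b).out with hYdef
  have hX : ∀ b, (QuotientGroup.mk (X b) : G ⧸ N) = x b := fun b => (x b).out_eq'
  have hY : ∀ b, (QuotientGroup.mk (Y b) : G ⧸ N) = y b := fun b => (y b).out_eq'
  have hz : ∀ b, z b = (x b * y b)⁻¹ := by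
    intro b
    exact eq_inv_of_mul_eq_one_right ((hQ b b b).mpr ⟨rfl, rfl⟩)
  set e := (finProdFinEquiv : Fin m × Fin m' ≃ Fin (m * m'))
  refine ⟨fun p => (s (e.symm p).1 : G) * X (e.symm p).2,
          fun p => (X (e.symm p).2)⁻¹ * (t (e.symm p).1 : G) * X (e.symm p).2 * Y (e.symm p).2,
          fun p => (X (e.symm p).2 * Y (e.symm p).2)⁻¹ * (u (e.symm p).1 : G), ?_⟩
  intro i j k
  constructor
  · intro h
    -- project to the quotient
    have hq : x (e.symm i).2 * y (e.symm j).2 * z (e.symm k).2 = 1 := by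
      have := congrArg (QuotientGroup.mk (s := N)) h
      simp only [QuotientGroup.mk_mul, QuotientGroup.mk_inv, hX, hY,
        QuotientGroup.mk_one] at this
      rw [(QuotientGroup.eq_one_iff _).mpr (s (e.symm i).1).2,
        (QuotientGroup.eq_one_iff _).mpr (t (e.symm j).1).2,
        (QuotientGroup.eq_one_iff _).mpr (u (e.symm k).1).2] at this
      rw [hz]
      rw [one_mul, mul_one, mul_one] at this
      calc x (e.symm i).2 * y (e.symm j).2 * (x (e.symm k).2 * y (e.symm k).2)⁻¹
          = x (e.symm i).2 * ((x (e.symm j).2)⁻¹ * x (e.symm j).2 * y (e.symm j).2) *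
            (x (e.symm k).2 * y (e.symm k).2)⁻¹ := by group
        _ = 1 := this
    obtain ⟨h2a, h2b⟩ := (hQ _ _ _).mp hq
    -- now the N-part
    beta_reduce at h
    rw [← h2a, ← h2b, ← h2a] at h
    have hn : (s (e.symm i).1 : G) * t (e.symm j).1 * u (e.symm k).1 = 1 := by
      rw [← h]; group
    obtain ⟨h1a, h1b⟩ := (hN _ _ _).mp hn
    constructor
    · have : e.symm i = e.symm j := Prod.ext h1a h2a
      exact e.symm.injective this
    · have : e.symm j = e.symm k := Prod.ext h1b h2b
      exact e.symm.injective this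
  · rintro ⟨rfl, rfl⟩
    have hn := (hN (e.symm i).1 (e.symm i).1 (e.symm i).1).mpr ⟨rfl, rfl⟩
    calc (s (e.symm i).1 : G) * X (e.symm i).2 *
          ((X (e.symm i).2)⁻¹ * (t (e.symm i).1 : G) * X (e.symm i).2 * Y (e.symm i).2) *
          ((X (e.symm i).2 * Y (e.symm i).2)⁻¹ * (u (e.symm i).1 : G))
        = (s (e.symm i).1 : G) * t (e.symm i).1 * u (e.symm i).1 := by group
      _ = 1 := hn
end

section
/- Every finite p-group of order p^n contains a border multiplicative matching of cardinality at least p^n/2^n. -/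
open Subgroup

/-- The border multiplicative matching property for six sequences. -/
def GoodBM {G : Type*} [Group G] {ι : Type*} (s t u : ι → G) (a b c : ι → ℤ) : Prop :=
  (∀ i j k, (s i * t j * u k = 1 ∧ a i + b j + c k = 0) ↔ (i = j ∧ j = k)) ∧
  (∀ i j k, s i * t j * u k = 1 → 0 ≤ a i + b j + c k)

lemma goodBM_reindex {G ι κ : Type*} [Group G] (e : κ ≃ ι) {s t u : ι → G} {a b c : ι → ℤ}
    (h : GoodBM s t u a b c) :
    GoodBM (s ∘ e) (t ∘ e) (u ∘ e) (a ∘ e) (b ∘ e) (c ∘ e) := by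
  obtain ⟨h1, h2⟩ := h
  constructor
  · intro i j k
    simp only [Function.comp_apply, h1 (e i) (e j) (e k), e.apply_eq_iff_eq]
  · intro i j k
    exact h2 (e i) (e j) (e k)

lemma zpowers_normal_of_center {G : Type*} [Group G] (g : G) (hg : g ∈ Subgroup.center G) :
    (Subgroup.zpowers g).Normal := by
  constructor
  rintro x ⟨k, rfl⟩ h
  have hc : h * g ^ k = g ^ k * h :=
    Subgroup.mem_center_iff.mp (Subgroup.zpow_mem (Subgroup.center G) hg k) h
  have : h * g ^ k * h⁻¹ = g ^ k := by rw [hc, mul_inv_cancel_right]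
  rw [this]
  exact ⟨k, rfl⟩

set_option maxHeartbeats 1000000 in
/-- The key composition step: a border matching in `G ⧸ ⟨g⟩` of cardinality `M`
(indexed by `ι`) for a central element `g` of prime order `p` yields a border
matching in `G` of cardinality `M * ⌈p/2⌉`. -/
lemma goodBM_step {G : Type*} [Group G] (p m : ℕ) (hp : p.Prime) (hm : 2 * m ≤ p + 1)
    (g : G) (hg : g ∈ Subgroup.center G) (hord : orderOf g = p)
    {ι : Type*}
    (S T U : ι → (G ⧸ Subgroup.zpowers g)) (A B C : ι → ℤ)
    (hN : (Subgroup.zpowers g).Normal := zpowers_normal_of_center g hg)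
    (H : GoodBM S T U A B C) :
    ∃ (s t u : ι × Fin m → G) (a b c : ι × Fin m → ℤ), GoodBM s t u a b c := by
  haveI := hN
  obtain ⟨H1, H2⟩ := H
  set φ : (G ⧸ Subgroup.zpowers g) → G := fun q => q.out with hφdef
  have hφ : ∀ q : G ⧸ Subgroup.zpowers g, (QuotientGroup.mk (φ q) : G ⧸ Subgroup.zpowers g) = q := fun q => QuotientGroup.out_eq' q
  have hmkg : ∀ r : ℤ, (QuotientGroup.mk (g ^ r) : G ⧸ Subgroup.zpowers g) = 1 := by
    intro r
    exact (QuotientGroup.eq_one_iff _).mpr (Subgroup.zpow_mem _ (Subgroup.mem_zpowers g) r)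
  -- commutation facts
  have hcomm : ∀ (h : G) (r : ℤ), g ^ r * h = h * g ^ r := by
    intro h r
    have hC : Commute h g := Subgroup.mem_center_iff.mp hg h
    exact ((hC.zpow_right r).eq).symm
  have h2c : ∀ (r : ℤ) (x y : G), g ^ r * (x * y) = x * (g ^ r * y) := by
    intro r x y
    rw [← mul_assoc, hcomm x r, mul_assoc]
  have hprod : ∀ (X Y Z : G) (r q w : ℤ),
      (X * g ^ r) * (Y * g ^ q) * (Z * g ^ w) = (X * Y * Z) * g ^ (r + q + w) := by
    intro X Y Z r q w
    simp only [mul_assoc]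
    rw [h2c q Z, h2c r Y, h2c r Z, ← zpow_add, ← zpow_add, ← add_assoc]
  -- diagonal elements of the quotient matching
  have hdiag : ∀ k, S k * T k * U k = 1 ∧ A k + B k + C k = 0 :=
    fun k => (H1 k k k).mpr ⟨rfl, rfl⟩
  have hexists : ∀ k, ∃ r : ℤ, g ^ r = φ (S k) * φ (T k) * φ (U k) := by
    intro k
    refine Subgroup.mem_zpowers_iff.mp ((QuotientGroup.eq_one_iff _).mp ?_)
    rw [QuotientGroup.mk_mul, QuotientGroup.mk_mul, hφ, hφ, hφ]
    exact (hdiag k).1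
  choose e he using hexists
  -- order facts
  have hzero : ∀ w : ℤ, g ^ w = 1 → |w| < p → w = 0 := by
    intro w h1 h2
    refine Int.eq_zero_of_abs_lt_dvd ?_ h2
    have := orderOf_dvd_iff_zpow_eq_one.mpr h1
    rwa [hord] at this
  have hp2 : 2 ≤ p := hp.two_le
  set K : ℤ := 2 * (m : ℤ) ^ 2 + 1 with hKdef
  refine ⟨fun ix => φ (S ix.1) * g ^ ((ix.2 : ℤ)),
          fun jy => φ (T jy.1) * g ^ ((jy.2 : ℤ)),
          fun kz => φ (U kz.1) * g ^ (-(2 * (kz.2 : ℤ)) - e kz.1),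
          fun ix => K * A ix.1 + (ix.2 : ℤ) ^ 2,
          fun jy => K * B jy.1 + (jy.2 : ℤ) ^ 2,
          fun kz => K * C kz.1 - 2 * (kz.2 : ℤ) ^ 2, ?_, ?_⟩
  · -- the iff condition
    rintro ⟨i, x⟩ ⟨j, y⟩ ⟨k, z⟩
    dsimp only
    rw [hprod]
    constructor
    · rintro ⟨hone, hsum⟩
      have hQ : S i * T j * U k = 1 := by
        have := congrArg (QuotientGroup.mk (s := Subgroup.zpowers g)) hone
        rwa [QuotientGroup.mk_mul, QuotientGroup.mk_mul, QuotientGroup.mk_mul, hφ, hφ, hφ, hmkg,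
          mul_one, QuotientGroup.mk_one] at this
      have hABC : 0 ≤ A i + B j + C k := H2 i j k hQ
      have hx : (x : ℤ) < m := by exact_mod_cast x.isLt
      have hy : (y : ℤ) < m := by exact_mod_cast y.isLt
      have hz : (z : ℤ) < m := by exact_mod_cast z.isLt
      have hx0 : (0 : ℤ) ≤ x := Int.ofNat_nonneg _
      have hy0 : (0 : ℤ) ≤ y := Int.ofNat_nonneg _
      have hz0 : (0 : ℤ) ≤ z := Int.ofNat_nonneg _
      have hABC0 : A i + B j + C k = 0 := by
        by_contra hne
        have h1 : 1 ≤ A i + B j + C k := by omega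
        nlinarith [hsum]
      obtain ⟨rfl, rfl⟩ := (H1 i j k).mp ⟨hQ, hABC0⟩
      -- now i = j = k (as `ι` indices, all named `i`)
      have hsmall : (x : ℤ) ^ 2 + (y : ℤ) ^ 2 - 2 * (z : ℤ) ^ 2 = 0 := by
        have := hABC0
        nlinarith [hsum]
      have hlin : (x : ℤ) + y - 2 * z = 0 := by
        have hE : (x : ℤ) + (y : ℤ) + (-(2 * (z : ℤ)) - e i) = -(e i) + ((x : ℤ) + y - 2 * z) := by
          ring
        have hone' : g ^ ((x : ℤ) + y - 2 * z) = 1 := by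
          have h1 : g ^ (e i) * g ^ (-(e i) + ((x : ℤ) + y - 2 * z)) = 1 := by
            rw [← hE, he i]; exact hone
          have h2 : e i + (-(e i) + ((x : ℤ) + y - 2 * z)) = (x : ℤ) + y - 2 * z := by ring
          rwa [← zpow_add, h2] at h1
        refine hzero _ hone' ?_
        rw [abs_lt]
        constructor <;> omega
      have hxy : ((x : ℤ) - y) ^ 2 = 0 := by linear_combination 2 * hsmall - ((x : ℤ) + y + 2 * z) * hlin
      have hxy' : (x : ℤ) = y := by
        have h0 : (x : ℤ) - y = 0 := by
          have := sq_eq_zero_iff.mp hxy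
          exact this
        omega
      have hxz' : (x : ℤ) = z := by omega
      have hxy2 : x = y := by
        apply Fin.ext; exact_mod_cast hxy'
      have hxz2 : x = z := by
        apply Fin.ext; exact_mod_cast hxz'
      subst hxy2
      subst hxz2
      exact ⟨rfl, rfl⟩
    · rintro ⟨hij, hjk⟩
      simp only [Prod.mk.injEq] at hij hjk
      obtain ⟨rfl, rfl⟩ := hij
      obtain ⟨rfl, rfl⟩ := hjk
      constructor
      · have hE : (x : ℤ) + (x : ℤ) + (-(2 * (x : ℤ)) - e i) = -(e i) := by ring
        rw [hE, ← he i, ← zpow_add, add_neg_cancel, zpow_zero]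
      · have hd := (hdiag i).2
        linear_combination K * hd
  · -- the border condition
    rintro ⟨i, x⟩ ⟨j, y⟩ ⟨k, z⟩ hone
    dsimp only at hone ⊢
    rw [hprod] at hone
    have hQ : S i * T j * U k = 1 := by
      have := congrArg (QuotientGroup.mk (s := Subgroup.zpowers g)) hone
      rwa [QuotientGroup.mk_mul, QuotientGroup.mk_mul, QuotientGroup.mk_mul, hφ, hφ, hφ, hmkg,
        mul_one, QuotientGroup.mk_one] at this
    have hABC : 0 ≤ A i + B j + C k := H2 i j k hQ
    have hx : (x : ℤ) < m := by exact_mod_cast x.isLt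
    have hy : (y : ℤ) < m := by exact_mod_cast y.isLt
    have hz : (z : ℤ) < m := by exact_mod_cast z.isLt
    have hx0 : (0 : ℤ) ≤ x := Int.ofNat_nonneg _
    have hy0 : (0 : ℤ) ≤ y := Int.ofNat_nonneg _
    have hz0 : (0 : ℤ) ≤ z := Int.ofNat_nonneg _
    by_cases hcase : i = j ∧ j = k
    · obtain ⟨rfl, rfl⟩ := hcase
      have hE : (x : ℤ) + (y : ℤ) + (-(2 * (z : ℤ)) - e i) = -(e i) + ((x : ℤ) + y - 2 * z) := by
        ring
      have hone' : g ^ ((x : ℤ) + y - 2 * z) = 1 := by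
        have h1 : g ^ (e i) * g ^ (-(e i) + ((x : ℤ) + y - 2 * z)) = 1 := by
          rw [← hE, he i]; exact hone
        have h2x : e i + (-(e i) + ((x : ℤ) + y - 2 * z)) = (x : ℤ) + y - 2 * z := by ring
        rwa [← zpow_add, h2x] at h1
      have hlin : (x : ℤ) + y - 2 * z = 0 := by
        refine hzero _ hone' ?_
        rw [abs_lt]
        constructor <;> omega
      have := (hdiag i).2
      nlinarith [sq_nonneg ((x : ℤ) - y)]
    · have h1 : 1 ≤ A i + B j + C k := by
        rcases eq_or_lt_of_le hABC with h | h
        · exact absurd ((H1 i j k).mp ⟨hQ, h.symm⟩) hcase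
        · omega
      nlinarith []

lemma goodBM_pow (p : ℕ) (hp : p.Prime) :
    ∀ (n : ℕ) (G : Type*) [Group G] [Finite G], Nat.card G = p ^ n →
      ∃ (s t u : Fin (((p + 1) / 2) ^ n) → G) (a b c : Fin (((p + 1) / 2) ^ n) → ℤ),
        GoodBM s t u a b c := by
  intro n
  induction n with
  | zero =>
    intro G _ _ _
    refine ⟨fun _ => 1, fun _ => 1, fun _ => 1, fun _ => 0, fun _ => 0, fun _ => 0, ?_, ?_⟩
    · intro i j k
      haveI : Subsingleton (Fin (((p + 1) / 2) ^ 0)) := by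
        rw [pow_zero]
        exact ⟨fun a b => Fin.ext (by omega)⟩
      simp [Subsingleton.elim i j, Subsingleton.elim j k]
      rfl
    · intro i j k _
      simp
  | succ n IH =>
    intro G _ _ hG
    haveI : Fact p.Prime := ⟨hp⟩
    have hnt : Nontrivial G := by
      have h1 : 1 < Nat.card G := by
        rw [hG]
        exact Nat.one_lt_pow (Nat.succ_ne_zero n) hp.one_lt
      exact Finite.one_lt_card_iff_nontrivial.mp h1
    have hPG : IsPGroup p G := IsPGroup.of_card hG
    haveI hcnt : Nontrivial (Subgroup.center G) := hPG.center_nontrivial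
    have hcPG : IsPGroup p (Subgroup.center G) := hPG.to_subgroup (Subgroup.center G)
    have hdvd : p ∣ Nat.card (Subgroup.center G) := by
      obtain ⟨k, hk0, hk⟩ := hcPG.nontrivial_iff_card.mp hcnt
      rw [hk]
      exact dvd_pow_self p hk0.ne'
    obtain ⟨z, hz⟩ := exists_prime_orderOf_dvd_card' (G := Subgroup.center G) p hdvd
    set g : G := (z : G) with hgdef
    have hg : g ∈ Subgroup.center G := z.2
    have hord : orderOf g = p := by rw [hgdef, Subgroup.orderOf_coe]; exact hz
    haveI hN : (Subgroup.zpowers g).Normal := zpowers_normal_of_center g hg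
    have hcardN : Nat.card (Subgroup.zpowers g) = p := by
      rw [Nat.card_zpowers, hord]
    have hcardQ : Nat.card (G ⧸ Subgroup.zpowers g) = p ^ n := by
      have hlag := Subgroup.card_eq_card_quotient_mul_card_subgroup (Subgroup.zpowers g)
      rw [hG, hcardN, pow_succ] at hlag
      exact (Nat.eq_of_mul_eq_mul_right hp.pos hlag).symm
    obtain ⟨S, T, U, A, B, C, hgood⟩ := IH (G ⧸ Subgroup.zpowers g) hcardQ
    obtain ⟨s, t, u, a, b, c, hgood'⟩ :=
      goodBM_step p ((p + 1) / 2) hp (by omega) g hg hord S T U A B C hN hgood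
    have e : Fin (((p + 1) / 2) ^ (n + 1)) ≃ Fin (((p + 1) / 2) ^ n) × Fin ((p + 1) / 2) :=
      (finCongr (pow_succ ((p + 1) / 2) n)).trans finProdFinEquiv.symm
    exact ⟨s ∘ e, t ∘ e, u ∘ e, a ∘ e, b ∘ e, c ∘ e, goodBM_reindex e hgood'⟩

/-- Every finite `p`-group of order `p^n` contains a border multiplicative
matching of cardinality at least `p^n / 2^n`. -/
theorem pGroup_border_matching {G : Type*} [Group G] [Fintype G]
    (p n : ℕ) (hp : p.Prime) (hG : Fintype.card G = p ^ n) :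
    ∃ M : ℕ, ((p : ℝ) ^ n / 2 ^ n) ≤ (M : ℝ) ∧
      ∃ (s t u : Fin M → G) (a b c : Fin M → ℤ),
        (∀ i j k, (s i * t j * u k = 1 ∧ a i + b j + c k = 0) ↔ (i = j ∧ j = k)) ∧
        (∀ i j k, s i * t j * u k = 1 → 0 ≤ a i + b j + c k) := by
  have hcard : Nat.card G = p ^ n := by rw [Nat.card_eq_fintype_card, hG]
  obtain ⟨s, t, u, a, b, c, h1, h2⟩ := goodBM_pow p hp n G hcard
  refine ⟨((p + 1) / 2) ^ n, ?_, s, t, u, a, b, c, h1, h2⟩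
  have hple : (p : ℝ) ≤ 2 * ((p + 1) / 2 : ℕ) := by
    have : p ≤ 2 * ((p + 1) / 2) := by omega
    exact_mod_cast this
  have h2pos : (0 : ℝ) < 2 := by norm_num
  have hred : ((p : ℝ) / 2) ≤ (((p + 1) / 2 : ℕ) : ℝ) := by linarith
  calc (p : ℝ) ^ n / 2 ^ n = ((p : ℝ) / 2) ^ n := by rw [div_pow]
    _ ≤ (((p + 1) / 2 : ℕ) : ℝ) ^ n := pow_le_pow_left₀ (by positivity) hred n
    _ = ((((p + 1) / 2) ^ n : ℕ) : ℝ) := by push_cast; ring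
end

section
/- Flat rank is additive under direct sum of tensors over an infinite field: for tensors t ∈ F^X ⊗ F^Y ⊗ F^Z and t' ∈ F^{X'} ⊗ F^{Y'} ⊗ F^{Z'} (with the index sets disjoint), frank(t ⊕ t') = frank(t) + frank(t'). -/
/-- Contraction of the third factor of a 3-tensor with a vector. -/
noncomputable def contractZ {K : Type*} [Field K] {X Y Z : Type*} [Fintype Z]
    (t : X → Y → Z → K) (v : Z → K) : Matrix X Y K :=
  Matrix.of fun x y => ∑ z, t x y z * v z

/-- `HasFlatRankLE K t ℓ` : there is a subspace `V` of the third factor, of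
codimension `c`, with all contractions of `t` against vectors of `V` of matrix
rank at most `r`, and `r + c ≤ ℓ`. -/
def HasFlatRankLE {X Y Z : Type*} (K : Type*) [Field K]
    [Fintype X] [Fintype Y] [Fintype Z] (t : X → Y → Z → K) (ℓ : ℕ) : Prop :=
  ∃ (V : Submodule K (Z → K)) (r : ℕ),
    (∀ v ∈ V, (contractZ t v).rank ≤ r) ∧
    r + (Fintype.card Z - Module.finrank K V) ≤ ℓ

/-- The flat rank of a 3-tensor. -/
noncomputable def flatRank {X Y Z : Type*} (K : Type*) [Field K]
    [Fintype X] [Fintype Y] [Fintype Z] (t : X → Y → Z → K) : ℕ :=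
  sInf {ℓ | HasFlatRankLE K t ℓ}

/-- The direct sum of two 3-tensors on disjoint index sets. -/
def tensorDirectSum {K : Type*} [Field K] {X Y Z X' Y' Z' : Type*}
    (t : X → Y → Z → K) (t' : X' → Y' → Z' → K) :
    (X ⊕ X') → (Y ⊕ Y') → (Z ⊕ Z') → K := fun x y z =>
  match x, y, z with
  | Sum.inl x, Sum.inl y, Sum.inl z => t x y z
  | Sum.inr x, Sum.inr y, Sum.inr z => t' x y z
  | _, _, _ => 0

/-! ### Auxiliary lemmas -/

open Matrix Module Polynomial

section Aux

variable {K : Type*} [Field K]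

/-- Rank of an arbitrary submatrix is at most the rank. -/
lemma rank_submatrix_le_general {X Y X₂ Y₂ : Type*} [Fintype X] [Fintype Y]
    [Fintype X₂] [Fintype Y₂] (A : Matrix X Y K) (f : X₂ → X) (g : Y₂ → Y) :
    (A.submatrix f g).rank ≤ A.rank := by
  classical
  have h1 : ((1 : Matrix X X K).submatrix f (Equiv.refl X)) * A = A.submatrix f id := by
    rw [one_submatrix_mul]
    rfl
  have h2 : (A.submatrix f id) * ((1 : Matrix Y Y K).submatrix (Equiv.refl Y) g)
      = A.submatrix f g := by
    rw [mul_submatrix_one]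
    rfl
  calc (A.submatrix f g).rank
      = (((1 : Matrix X X K).submatrix f (Equiv.refl X)) * A
          * ((1 : Matrix Y Y K).submatrix (Equiv.refl Y) g)).rank := by rw [h1, h2]
    _ ≤ (((1 : Matrix X X K).submatrix f (Equiv.refl X)) * A).rank := rank_mul_le_left _ _
    _ ≤ A.rank := rank_mul_le_right _ _

lemma rank_ge_of_det_submatrix {X Y : Type*} [Fintype X] [Fintype Y] {n : ℕ}
    (A : Matrix X Y K) (f : Fin n → X) (g : Fin n → Y)
    (h : (A.submatrix f g).det ≠ 0) : n ≤ A.rank := by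
  have hu : IsUnit (A.submatrix f g) := by
    rw [Matrix.isUnit_iff_isUnit_det]
    exact h.isUnit
  have := Matrix.rank_of_isUnit _ hu
  calc n = Fintype.card (Fin n) := (Fintype.card_fin n).symm
    _ = (A.submatrix f g).rank := this.symm
    _ ≤ A.rank := rank_submatrix_le_general A f g

/-- There are `rank` many linearly independent columns. -/
lemma exists_linearIndependent_cols {X Y : Type*} [Fintype X] [Fintype Y]
    (A : Matrix X Y K) : ∃ g : Fin A.rank → Y, LinearIndependent K (fun i => Aᵀ (g i)) := by
  classical
  obtain ⟨s, hs_sub, hs_span, hs_li⟩ := exists_linearIndependent K (Set.range Aᵀ)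
  have hfin : s.Finite := (Set.finite_range Aᵀ).subset hs_sub
  lift s to Finset (X → K) using hfin with s hs
  subst hs
  have hcard : s.card = A.rank := by
    have h1 : finrank K (Submodule.span K (s : Set (X → K))) = s.card := by
      exact finrank_span_finset_eq_card hs_li
    rw [Matrix.rank_eq_finrank_span_cols, Matrix.col, ← hs_span, h1]
  have hchoice : ∀ v ∈ s, ∃ y, Aᵀ y = v := fun v hv => hs_sub hv
  choose ch hch using hchoice
  obtain ⟨e⟩ : Nonempty (Fin A.rank ≃ {x // x ∈ s}) := by
    rw [← hcard]
    exact ⟨(Finset.equivFin s).symm⟩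
  refine ⟨fun i => ch (e i) (e i).2, ?_⟩
  have : (fun i => Aᵀ (ch (e i) (e i).2)) = (fun i => ((e i : X → K))) := by
    funext i; rw [hch (e i) (e i).2]
  rw [this]
  exact (hs_li.comp e e.injective)

lemma exists_invertible_minor {X Y : Type*} [Fintype X] [Fintype Y]
    (A : Matrix X Y K) : ∃ (f : Fin A.rank → X) (g : Fin A.rank → Y),
      (A.submatrix f g).det ≠ 0 := by
  classical
  obtain ⟨g, hg⟩ := exists_linearIndependent_cols A
  have hBrank : (A.submatrix id g).rank = A.rank := by
    rw [Matrix.rank_eq_finrank_span_cols, Matrix.col]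
    have hBT : (A.submatrix id g)ᵀ = fun i => Aᵀ (g i) := rfl
    rw [hBT, finrank_span_eq_card hg, Fintype.card_fin]
  have hBTrank : (A.submatrix id g)ᵀ.rank = A.rank := by
    rw [Matrix.rank_transpose, hBrank]
  obtain ⟨f₀, hf₀⟩ := exists_linearIndependent_cols (A.submatrix id g)ᵀ
  let e : Fin A.rank ≃ Fin (A.submatrix id g)ᵀ.rank := finCongr hBTrank.symm
  refine ⟨fun i => f₀ (e i), g, ?_⟩
  have hrows : LinearIndependent K
      (fun i : Fin A.rank => (A.submatrix (fun j => f₀ (e j)) g) i) := by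
    have h2 : (fun i : Fin A.rank => (A.submatrix (fun j => f₀ (e j)) g) i)
        = (fun i : Fin A.rank => (A.submatrix id g)ᵀᵀ (f₀ (e i))) := rfl
    rw [h2]
    exact hf₀.comp e e.injective
  have hu : IsUnit (A.submatrix (fun i => f₀ (e i)) g) :=
    Matrix.linearIndependent_rows_iff_isUnit.mp hrows
  exact ((Matrix.isUnit_iff_isUnit_det _).mp hu).ne_zero

noncomputable def detPoly {n : ℕ} (A B : Matrix (Fin n) (Fin n) K) : K[X] :=
  (Matrix.of fun i j => C (A i j) + X * C (B i j)).det

lemma detPoly_eval {n : ℕ} (A B : Matrix (Fin n) (Fin n) K) (c : K) :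
    (detPoly A B).eval c = (A + c • B).det := by
  have h := RingHom.map_det (evalRingHom c) (Matrix.of fun i j => C (A i j) + X * C (B i j))
  rw [detPoly, ← coe_evalRingHom, h]
  congr 1
  ext i j
  show eval c (C (A i j) + X * C (B i j)) = A i j + c * B i j
  simp
  ring

lemma exists_eval_ne_zero [Infinite K] {p : K[X]} (hp : p ≠ 0) : ∃ c, p.eval c ≠ 0 := by
  by_contra h
  push_neg at h
  exact hp (Polynomial.funext fun c => by rw [eval_zero]; exact h c)

/-- Genericity: some point on the line makes both matrices achieve the ranks of
the two endpoints. -/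
lemma exists_good_point [Infinite K] {X Y X' Y' : Type*} [Fintype X] [Fintype Y]
    [Fintype X'] [Fintype Y'] (U W : Matrix X Y K) (U' W' : Matrix X' Y' K) :
    ∃ c : K, U.rank ≤ (U + c • (W - U)).rank ∧ W'.rank ≤ (U' + c • (W' - U')).rank := by
  classical
  obtain ⟨f, g, hfg⟩ := exists_invertible_minor U
  obtain ⟨f', g', hfg'⟩ := exists_invertible_minor W'
  set P : K[X] := detPoly (U.submatrix f g) ((W - U).submatrix f g) with hP
  set Q : K[X] := detPoly (U'.submatrix f' g') ((W' - U').submatrix f' g') with hQ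
  have hPeval : ∀ c : K, P.eval c = ((U + c • (W - U)).submatrix f g).det := by
    intro c
    rw [hP, detPoly_eval]
    congr 1
  have hQeval : ∀ c : K, Q.eval c = ((U' + c • (W' - U')).submatrix f' g').det := by
    intro c
    rw [hQ, detPoly_eval]
    congr 1
  have hP0 : P ≠ 0 := by
    intro h
    apply hfg
    have := hPeval 0
    rw [h] at this
    simpa using this.symm
  have hQ0 : Q ≠ 0 := by
    intro h
    apply hfg'
    have := hQeval 1
    rw [h] at this
    simp only [eval_zero] at this
    have h1 : U' + (1 : K) • (W' - U') = W' := by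
      rw [one_smul]; abel
    rw [h1] at this
    exact this.symm
  obtain ⟨c, hc⟩ := exists_eval_ne_zero (mul_ne_zero hP0 hQ0)
  rw [eval_mul, mul_ne_zero_iff] at hc
  refine ⟨c, ?_, ?_⟩
  · exact rank_ge_of_det_submatrix _ f g (by rw [← hPeval]; exact hc.1)
  · exact rank_ge_of_det_submatrix _ f' g' (by rw [← hQeval]; exact hc.2)

/-- Extension by zero on the left component. -/
noncomputable def extSumL (K : Type*) [Field K] (X X' : Type*) : (X → K) →ₗ[K] (X ⊕ X' → K) where
  toFun f := Sum.elim f 0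
  map_add' f g := by funext x; cases x <;> simp
  map_smul' c f := by funext x; cases x <;> simp

/-- Extension by zero on the right component. -/
noncomputable def extSumR (K : Type*) [Field K] (X X' : Type*) : (X' → K) →ₗ[K] (X ⊕ X' → K) where
  toFun f := Sum.elim 0 f
  map_add' f g := by funext x; cases x <;> simp
  map_smul' c f := by funext x; cases x <;> simp

lemma extSumL_injective {X X' : Type*} : Function.Injective (extSumL K X X') := by
  intro f g h
  funext x
  have := congrFun h (Sum.inl x)
  simpa [extSumL] using this

lemma extSumR_injective {X X' : Type*} : Function.Injective (extSumR K X X') := by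
  intro f g h
  funext x
  have := congrFun h (Sum.inr x)
  simpa [extSumR] using this

lemma rank_fromBlocks_diag {X X' Y Y' : Type*} [Fintype X] [Fintype X']
    [Fintype Y] [Fintype Y'] (A : Matrix X Y K) (D : Matrix X' Y' K) :
    (Matrix.fromBlocks A 0 0 D).rank = A.rank + D.rank := by
  classical
  rw [Matrix.rank_eq_finrank_span_cols, Matrix.rank_eq_finrank_span_cols,
    Matrix.rank_eq_finrank_span_cols, Matrix.col, Matrix.col, Matrix.col]
  have hT : (Matrix.fromBlocks A 0 0 D)ᵀ
      = Matrix.fromBlocks Aᵀ 0 0 Dᵀ := by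
    rw [Matrix.fromBlocks_transpose]; simp
  have hfun : ((Matrix.fromBlocks A 0 0 D)ᵀ : (Y ⊕ Y') → (X ⊕ X' → K))
      = Sum.elim (fun y => extSumL K X X' (Aᵀ y)) (fun y' => extSumR K X X' (Dᵀ y')) := by
    rw [hT]
    funext y
    cases y with
    | inl y => funext x; cases x <;> rfl
    | inr y => funext x; cases x <;> rfl
  have hrange : Set.range ((Matrix.fromBlocks A 0 0 D)ᵀ)
      = (extSumL K X X' '' Set.range Aᵀ) ∪ (extSumR K X X' '' Set.range Dᵀ) := by
    rw [hfun, Set.Sum.elim_range]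
    exact congrArg₂ (· ∪ ·) (Set.range_comp _ _) (Set.range_comp _ _)
  rw [hrange, Submodule.span_union, Submodule.span_image, Submodule.span_image]
  set P := Submodule.span K (Set.range Aᵀ)
  set Q := Submodule.span K (Set.range Dᵀ)
  have hdisj : (P.map (extSumL K X X')) ⊓ (Q.map (extSumR K X X')) = ⊥ := by
    rw [eq_bot_iff]
    rintro v ⟨⟨a, _, rfl⟩, ⟨b, _, hb⟩⟩
    simp only [Submodule.mem_bot]
    funext x
    cases x with
    | inl x =>
      have := congrFun hb (Sum.inl x)
      simp only [extSumR, LinearMap.coe_mk, AddHom.coe_mk, Sum.elim_inl, Pi.zero_apply] at this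
      simpa [extSumL] using this.symm
    | inr x => rfl
  have h1 : finrank K (P.map (extSumL K X X')) = finrank K P :=
    (Submodule.equivMapOfInjective _ extSumL_injective P).finrank_eq.symm
  have h2 : finrank K (Q.map (extSumR K X X')) = finrank K Q :=
    (Submodule.equivMapOfInjective _ extSumR_injective Q).finrank_eq.symm
  have := Submodule.finrank_sup_add_finrank_inf_eq
    (P.map (extSumL K X X')) (Q.map (extSumR K X X'))
  rw [hdisj, finrank_bot, add_zero, h1, h2] at this
  exact this

lemma contractZ_affine {X Y Z : Type*} [Fintype Z] (t : X → Y → Z → K)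
    (a b : Z → K) (c : K) :
    contractZ t (a + c • (b - a)) = contractZ t a + c • (contractZ t b - contractZ t a) := by
  ext x y
  simp only [contractZ, Matrix.of_apply, Matrix.add_apply, Matrix.smul_apply, Matrix.sub_apply,
    Pi.add_apply, Pi.smul_apply, Pi.sub_apply, smul_eq_mul, mul_add, mul_sub,
    Finset.sum_add_distrib, Finset.sum_sub_distrib, Finset.mul_sum, mul_left_comm]

lemma contractZ_directSum {X Y Z X' Y' Z' : Type*} [Fintype Z] [Fintype Z']
    (t : X → Y → Z → K) (t' : X' → Y' → Z' → K) (v : Z ⊕ Z' → K) :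
    contractZ (tensorDirectSum t t') v
      = Matrix.fromBlocks (contractZ t (fun z => v (Sum.inl z))) 0 0
          (contractZ t' (fun z => v (Sum.inr z))) := by
  ext x y
  cases x <;> cases y <;>
    simp [contractZ, tensorDirectSum, Fintype.sum_sum_type, Matrix.fromBlocks]

set_option synthInstance.maxHeartbeats 1000000

lemma finrank_le_map_add_map {Z Z' : Type*} [Fintype Z] [Fintype Z']
    (V : Submodule K (Z ⊕ Z' → K)) :
    finrank K V ≤ finrank K (V.map (LinearMap.funLeft K K Sum.inl))
      + finrank K (V.map (LinearMap.funLeft K K Sum.inr)) := by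
  classical
  let πL : (Z ⊕ Z' → K) →ₗ[K] (Z → K) := LinearMap.funLeft K K Sum.inl
  let πR : (Z ⊕ Z' → K) →ₗ[K] (Z' → K) := LinearMap.funLeft K K Sum.inr
  let ψ : V →ₗ[K] (Z → K) := πL.comp V.subtype
  show finrank K V ≤ finrank K (V.map πL) + finrank K (V.map πR)
  have hrange : LinearMap.range ψ = V.map πL := by
    rw [LinearMap.range_comp, Submodule.range_subtype]
  have hrn := LinearMap.finrank_range_add_finrank_ker ψ
  let χ : LinearMap.ker ψ →ₗ[K] (Z' → K) := πR.comp (V.subtype.comp (LinearMap.ker ψ).subtype)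
  have hinj : Function.Injective χ := by
    intro x y hxy
    apply Subtype.ext; apply Subtype.ext
    funext z
    cases z with
    | inl z =>
      have hx : (x.1 : Z ⊕ Z' → K) ∘ Sum.inl = (0 : Z → K) := x.2
      have hy : (y.1 : Z ⊕ Z' → K) ∘ Sum.inl = (0 : Z → K) := y.2
      calc (x.1 : Z ⊕ Z' → K) (Sum.inl z) = 0 := congrFun hx z
        _ = (y.1 : Z ⊕ Z' → K) (Sum.inl z) := (congrFun hy z).symm
    | inr z => exact congrFun hxy z
  have hle : LinearMap.range χ ≤ V.map πR := by
    rintro _ ⟨x, rfl⟩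
    exact ⟨x.1.1, x.1.2, rfl⟩
  have h1 : finrank K (LinearMap.ker ψ) = finrank K (LinearMap.range χ) :=
    (LinearMap.finrank_range_of_inj hinj).symm
  have h2 : finrank K (LinearMap.range χ) ≤ finrank K (V.map πR) :=
    Submodule.finrank_mono hle
  rw [hrange] at hrn
  omega

lemma finrank_inf_comap {Z Z' : Type*} [Fintype Z] [Fintype Z']
    (V : Submodule K (Z → K)) (V' : Submodule K (Z' → K)) :
    finrank K ((V.comap (LinearMap.funLeft K K (Sum.inl : Z → Z ⊕ Z')))
      ⊓ (V'.comap (LinearMap.funLeft K K (Sum.inr : Z' → Z ⊕ Z'))) : Submodule K (Z ⊕ Z' → K))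
      = finrank K V + finrank K V' := by
  classical
  let πL : (Z ⊕ Z' → K) →ₗ[K] (Z → K) := LinearMap.funLeft K K Sum.inl
  let πR : (Z ⊕ Z' → K) →ₗ[K] (Z' → K) := LinearMap.funLeft K K Sum.inr
  let W : Submodule K (Z ⊕ Z' → K) := (V.comap πL) ⊓ (V'.comap πR)
  let ψ : W →ₗ[K] (Z → K) := πL.comp W.subtype
  show finrank K W = finrank K V + finrank K V'
  have hrange : LinearMap.range ψ = V := by
    apply le_antisymm
    · rintro _ ⟨⟨w, hw⟩, rfl⟩
      exact hw.1
    · intro v hv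
      have hmem : Sum.elim v (0 : Z' → K) ∈ W := by
        constructor
        · show Sum.elim v (0 : Z' → K) ∘ Sum.inl ∈ V
          have : Sum.elim v (0 : Z' → K) ∘ Sum.inl = v := rfl
          rwa [this]
        · show Sum.elim v (0 : Z' → K) ∘ Sum.inr ∈ V'
          have : Sum.elim v (0 : Z' → K) ∘ Sum.inr = (0 : Z' → K) := rfl
          rw [this]; exact V'.zero_mem
      exact ⟨⟨Sum.elim v (0 : Z' → K), hmem⟩, rfl⟩
  let χ : LinearMap.ker ψ →ₗ[K] (Z' → K) := πR.comp (W.subtype.comp (LinearMap.ker ψ).subtype)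
  have hinj : Function.Injective χ := by
    intro x y hxy
    apply Subtype.ext; apply Subtype.ext
    funext z
    cases z with
    | inl z =>
      have hx : (x.1 : Z ⊕ Z' → K) ∘ Sum.inl = (0 : Z → K) := x.2
      have hy : (y.1 : Z ⊕ Z' → K) ∘ Sum.inl = (0 : Z → K) := y.2
      calc (x.1 : Z ⊕ Z' → K) (Sum.inl z) = 0 := congrFun hx z
        _ = (y.1 : Z ⊕ Z' → K) (Sum.inl z) := (congrFun hy z).symm
    | inr z => exact congrFun hxy z
  have hrangeχ : LinearMap.range χ = V' := by
    apply le_antisymm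
    · rintro _ ⟨x, rfl⟩
      exact x.1.2.2
    · intro v' hv'
      have hmemW : Sum.elim (0 : Z → K) v' ∈ W := by
        constructor
        · show Sum.elim (0 : Z → K) v' ∘ Sum.inl ∈ V
          have : Sum.elim (0 : Z → K) v' ∘ Sum.inl = (0 : Z → K) := rfl
          rw [this]; exact V.zero_mem
        · show Sum.elim (0 : Z → K) v' ∘ Sum.inr ∈ V'
          have : Sum.elim (0 : Z → K) v' ∘ Sum.inr = v' := rfl
          rwa [this]
      have hmemker : (⟨Sum.elim (0 : Z → K) v', hmemW⟩ : W) ∈ LinearMap.ker ψ := by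
        show Sum.elim (0 : Z → K) v' ∘ Sum.inl = (0 : Z → K)
        rfl
      exact ⟨⟨⟨Sum.elim (0 : Z → K) v', hmemW⟩, hmemker⟩, rfl⟩
  have h1 : finrank K (LinearMap.ker ψ) = finrank K (LinearMap.range χ) :=
    (LinearMap.finrank_range_of_inj hinj).symm
  have hrn := LinearMap.finrank_range_add_finrank_ker ψ
  rw [hrange, h1, hrangeχ] at hrn
  omega

lemma hasFlatRankLE_flatRank {X Y Z : Type*} [Fintype X] [Fintype Y] [Fintype Z]
    (t : X → Y → Z → K) : HasFlatRankLE K t (flatRank K t) := by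
  have hne : {ℓ | HasFlatRankLE K t ℓ}.Nonempty := by
    refine ⟨Fintype.card X, ⊤, Fintype.card X, fun v _ => Matrix.rank_le_card_height _, ?_⟩
    have h1 : finrank K (⊤ : Submodule K (Z → K)) = Fintype.card Z := by
      rw [finrank_top]; exact Module.finrank_pi K
    omega
  exact Nat.sInf_mem hne

end Aux

/-- Over an infinite field, flat rank is additive under direct sums. -/
theorem flatRank_directSum {K : Type*} [Field K] [Infinite K]
    {X Y Z X' Y' Z' : Type*} [Fintype X] [Fintype Y] [Fintype Z]
    [Fintype X'] [Fintype Y'] [Fintype Z']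
    (t : X → Y → Z → K) (t' : X' → Y' → Z' → K) :
    flatRank K (tensorDirectSum t t') = flatRank K t + flatRank K t' := by
  classical
  apply le_antisymm
  · -- the easy direction
    obtain ⟨V, r, hV, hle⟩ := hasFlatRankLE_flatRank t
    obtain ⟨V', r', hV', hle'⟩ := hasFlatRankLE_flatRank t'
    apply Nat.sInf_le
    refine ⟨(V.comap (LinearMap.funLeft K K (Sum.inl : Z → Z ⊕ Z')))
      ⊓ (V'.comap (LinearMap.funLeft K K (Sum.inr : Z' → Z ⊕ Z'))), r + r', ?_, ?_⟩
    · intro v hv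
      rw [contractZ_directSum, rank_fromBlocks_diag]
      exact add_le_add (hV _ hv.1) (hV' _ hv.2)
    · rw [finrank_inf_comap]
      have hc1 : finrank K V ≤ Fintype.card Z := by
        have h := Submodule.finrank_le V
        rwa [Module.finrank_pi] at h
      have hc2 : finrank K V' ≤ Fintype.card Z' := by
        have h := Submodule.finrank_le V'
        rwa [Module.finrank_pi] at h
      have hcs : Fintype.card (Z ⊕ Z') = Fintype.card Z + Fintype.card Z' :=
        Fintype.card_sum
      omega
  · -- the hard direction
    obtain ⟨V, r, hV, hle⟩ := hasFlatRankLE_flatRank (tensorDirectSum t t')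
    set V₁ : Submodule K (Z → K) := V.map (LinearMap.funLeft K K Sum.inl) with hV₁
    set V₂ : Submodule K (Z' → K) := V.map (LinearMap.funLeft K K Sum.inr) with hV₂
    set S₁ : Set ℕ := (fun v => (contractZ t v).rank) '' (V₁ : Set (Z → K)) with hS₁
    set S₂ : Set ℕ := (fun v => (contractZ t' v).rank) '' (V₂ : Set (Z' → K)) with hS₂
    have hbdd1 : BddAbove S₁ := by
      refine ⟨Fintype.card X, ?_⟩
      rintro _ ⟨x, _, rfl⟩
      exact Matrix.rank_le_card_height _
    have hbdd2 : BddAbove S₂ := by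
      refine ⟨Fintype.card X', ?_⟩
      rintro _ ⟨x, _, rfl⟩
      exact Matrix.rank_le_card_height _
    obtain ⟨u₁, hu₁V, hu₁⟩ :=
      Nat.sSup_mem ⟨_, Set.mem_image_of_mem _ V₁.zero_mem⟩ hbdd1
    obtain ⟨w₂, hw₂V, hw₂⟩ :=
      Nat.sSup_mem ⟨_, Set.mem_image_of_mem _ V₂.zero_mem⟩ hbdd2
    obtain ⟨u, huV, hu⟩ := hu₁V
    obtain ⟨w, hwV, hw⟩ := hw₂V
    obtain ⟨c, h1, h2⟩ := exists_good_point (contractZ t u₁)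
      (contractZ t (fun z => w (Sum.inl z)))
      (contractZ t' (fun z => u (Sum.inr z))) (contractZ t' w₂)
    set v : Z ⊕ Z' → K := u + c • (w - u) with hvdef
    have hvV : v ∈ V := V.add_mem huV (V.smul_mem _ (V.sub_mem hwV huV))
    have hvL : (fun z => v (Sum.inl z))
        = u₁ + c • ((fun z => w (Sum.inl z)) - u₁) := by
      funext z
      have hz : u₁ z = u (Sum.inl z) := by rw [← hu]; rfl
      simp [hvdef, hz, Pi.add_apply, Pi.smul_apply, Pi.sub_apply, smul_eq_mul]
    have hvR : (fun z => v (Sum.inr z))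
        = (fun z => u (Sum.inr z)) + c • (w₂ - (fun z => u (Sum.inr z))) := by
      funext z
      have hz : w₂ z = w (Sum.inr z) := by rw [← hw]; rfl
      simp [hvdef, hz, Pi.add_apply, Pi.smul_apply, Pi.sub_apply, smul_eq_mul]
    have hrank1 : sSup S₁ ≤ (contractZ t (fun z => v (Sum.inl z))).rank := by
      rw [hvL, contractZ_affine]
      calc sSup S₁ = (contractZ t u₁).rank := hu₁.symm
        _ ≤ _ := h1
    have hrank2 : sSup S₂ ≤ (contractZ t' (fun z => v (Sum.inr z))).rank := by
      rw [hvR, contractZ_affine]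
      calc sSup S₂ = (contractZ t' w₂).rank := hw₂.symm
        _ ≤ _ := h2
    have hsum : sSup S₁ + sSup S₂ ≤ r := by
      have h := hV v hvV
      rw [contractZ_directSum, rank_fromBlocks_diag] at h
      omega
    have hf1 : flatRank K t ≤ sSup S₁ + (Fintype.card Z - finrank K V₁) := by
      apply Nat.sInf_le
      exact ⟨V₁, sSup S₁, fun x hx => le_csSup hbdd1 ⟨x, hx, rfl⟩, le_rfl⟩
    have hf2 : flatRank K t' ≤ sSup S₂ + (Fintype.card Z' - finrank K V₂) := by
      apply Nat.sInf_le
      exact ⟨V₂, sSup S₂, fun x hx => le_csSup hbdd2 ⟨x, hx, rfl⟩, le_rfl⟩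
    have hdim : finrank K V ≤ finrank K V₁ + finrank K V₂ := finrank_le_map_add_map V
    have hc1 : finrank K V₁ ≤ Fintype.card Z := by
      have h := Submodule.finrank_le V₁
      rwa [Module.finrank_pi] at h
    have hc2 : finrank K V₂ ≤ Fintype.card Z' := by
      have h := Submodule.finrank_le V₂
      rwa [Module.finrank_pi] at h
    have hcs : Fintype.card (Z ⊕ Z') = Fintype.card Z + Fintype.card Z' :=
      Fintype.card_sum
    omega
end

section
/- The flat rank and slice rank of the n × n matrix multiplication tensor ⟨n,n,n⟩ are both equal to n^2. -/
section Aux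

open Module Matrix Finset

variable {K : Type*} [Field K]


/-- An independent family inside the column space bounds the rank below. -/
lemma card_le_rank_of_mem_range {X Y ι : Type*} [Fintype X] [Fintype Y] [Fintype ι]
    (A : Matrix X Y K) (g : ι → X → K)
    (hmem : ∀ i, g i ∈ LinearMap.range A.mulVecLin)
    (hind : LinearIndependent K g) : Fintype.card ι ≤ A.rank := by
  classical
  rw [Matrix.rank]
  have : LinearIndependent K (fun i => (⟨g i, hmem i⟩ : LinearMap.range A.mulVecLin)) := by
    apply LinearIndependent.of_comp (LinearMap.range A.mulVecLin).subtype
    exact hind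
  exact this.fintype_card_le_finrank

lemma rank_outer_le_one {X Y : Type*} [Fintype X] [Fintype Y]
    (a : X → K) (b : Y → K) : (Matrix.of fun x y => a x * b y).rank ≤ 1 := by
  classical
  rw [Matrix.rank]
  have hle : LinearMap.range (Matrix.of fun x y => a x * b y).mulVecLin ≤
      Submodule.span K {a} := by
    rintro - ⟨w, rfl⟩
    have : (Matrix.of fun x y => a x * b y).mulVecLin w = (∑ y, b y * w y) • a := by
      ext x
      simp [Matrix.mulVecLin_apply, Matrix.mulVec, dotProduct, Finset.mul_sum,
        Finset.sum_mul, mul_comm, mul_assoc, mul_left_comm]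
    rw [this]
    exact Submodule.smul_mem _ _ (Submodule.mem_span_singleton_self a)
  calc finrank K (LinearMap.range (Matrix.of fun x y => a x * b y).mulVecLin)
      ≤ finrank K (Submodule.span K ({a} : Set (X → K))) := Submodule.finrank_mono hle
    _ ≤ 1 := by
        refine le_trans (finrank_span_le_card _) ?_
        simp

lemma rank_add_le' {X Y : Type*} [Fintype X] [Fintype Y] (A B : Matrix X Y K) :
    (A + B).rank ≤ A.rank + B.rank := by
  classical
  rw [Matrix.rank, Matrix.rank, Matrix.rank]
  have hle : LinearMap.range (A + B).mulVecLin ≤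
      LinearMap.range A.mulVecLin ⊔ LinearMap.range B.mulVecLin := by
    rintro - ⟨w, rfl⟩
    rw [Matrix.mulVecLin_add, LinearMap.add_apply]
    exact Submodule.add_mem_sup ⟨w, rfl⟩ ⟨w, rfl⟩
  exact le_trans (Submodule.finrank_mono hle)
    (Submodule.finrank_add_le_finrank_add_finrank _ _)

lemma rank_sum_le' {X Y ι : Type*} [Fintype X] [Fintype Y] (s : Finset ι)
    (f : ι → Matrix X Y K) : (∑ i ∈ s, f i).rank ≤ ∑ i ∈ s, (f i).rank := by
  classical
  induction s using Finset.induction with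
  | empty => simp
  | insert _ _ hx ih =>
      rw [Finset.sum_insert hx, Finset.sum_insert hx]
      exact le_trans (rank_add_le' _ _) (by omega)



lemma finrank_le_finrank_inf_ker_add_one {M : Type*} [AddCommGroup M] [Module K M]
    [FiniteDimensional K M] (A : Submodule K M) (ψ : M →ₗ[K] K) :
    finrank K A ≤ finrank K (A ⊓ LinearMap.ker ψ : Submodule K M) + 1 := by
  classical
  set ψ' := ψ.comp A.subtype with hψ'
  have hrn := LinearMap.finrank_range_add_finrank_ker ψ'
  have hmap : (LinearMap.ker ψ').map A.subtype = A ⊓ LinearMap.ker ψ := by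
    ext x
    constructor
    · rintro ⟨⟨y, hy⟩, hk, rfl⟩
      exact ⟨hy, by simpa [ψ'] using hk⟩
    · rintro ⟨hxA, hxk⟩
      exact ⟨⟨x, hxA⟩, by simpa [ψ'] using hxk, rfl⟩
  have hker : finrank K (LinearMap.ker ψ') = finrank K (A ⊓ LinearMap.ker ψ : Submodule K M) := by
    rw [← hmap]
    exact (Submodule.equivMapOfInjective A.subtype A.injective_subtype _).finrank_eq
  have hrange : finrank K (LinearMap.range ψ') ≤ 1 := by
    have := Submodule.finrank_le (LinearMap.range ψ')
    simpa using this
  omega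

lemma finrank_le_finset_inf_ker {M ι : Type*} [AddCommGroup M] [Module K M]
    [FiniteDimensional K M] (s : Finset ι) (φ : ι → (M →ₗ[K] K)) :
    finrank K M ≤ finrank K (s.inf fun i => LinearMap.ker (φ i) : Submodule K M) + s.card := by
  classical
  induction s using Finset.induction with
  | empty => rw [Finset.inf_empty, finrank_top]; simp
  | @insert a s ha ih =>
      rw [Finset.inf_insert, Finset.card_insert_of_notMem ha]
      have h2 : finrank K (s.inf fun i => LinearMap.ker (φ i) : Submodule K M) ≤
          finrank K ((LinearMap.ker (φ a) ⊓ s.inf fun i => LinearMap.ker (φ i) :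
            Submodule K M)) + 1 := by
        have := finrank_le_finrank_inf_ker_add_one (K := K)
          (s.inf fun i => LinearMap.ker (φ i)) (φ a)
        refine le_trans this ?_
        have : ((s.inf fun i => LinearMap.ker (φ i)) ⊓ LinearMap.ker (φ a) : Submodule K M) =
            (LinearMap.ker (φ a) ⊓ s.inf fun i => LinearMap.ker (φ i)) := inf_comm _ _
        rw [this]
      omega

/-- Deficiency form of König's theorem: a set of cells with more than `s*m`
elements in an `m × m` grid contains a matching of size `s+1`. -/
lemma konig_matching {m s : ℕ} (S : Finset (Fin m × Fin m))
    (hcard : s * m < S.card) :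
    ∃ p : Fin (s + 1) → Fin m × Fin m, (∀ k, p k ∈ S) ∧
      Function.Injective (fun k => (p k).1) ∧ Function.Injective (fun k => (p k).2) := by
  classical
  set N : Fin m → Finset (Fin m) := fun i => (S.filter fun c => c.1 = i).image Prod.snd with hN
  set g : Finset (Fin m) → ℕ := fun A => A.card - (A.biUnion N).card with hg
  set δ : ℕ := (univ : Finset (Fin m)).powerset.sup g with hδ
  set t : Fin m → Finset (Fin m ⊕ Fin δ) :=
    fun i => (N i).image Sum.inl ∪ univ.image Sum.inr with ht
  have hdisj : ∀ (B : Finset (Fin m)),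
      Disjoint (B.image Sum.inl) ((univ : Finset (Fin δ)).image Sum.inr) := by
    intro B
    simp only [disjoint_left, mem_image]
    rintro x ⟨j, _, rfl⟩ ⟨i, _, h⟩
    simp at h
  have hbiU : ∀ A : Finset (Fin m), A.Nonempty →
      A.biUnion t = (A.biUnion N).image Sum.inl ∪ univ.image Sum.inr := by
    rintro A ⟨a, haA⟩
    ext x
    simp only [mem_biUnion, ht, mem_union, mem_image]
    constructor
    · rintro ⟨i, hi, hx⟩
      rcases hx with ⟨j, hj, rfl⟩ | h
      · exact Or.inl ⟨j, ⟨i, hi, hj⟩, rfl⟩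
      · exact Or.inr h
    · rintro (⟨j, ⟨i, hi, hj⟩, rfl⟩ | h)
      · exact ⟨i, hi, Or.inl ⟨j, hj, rfl⟩⟩
      · exact ⟨a, haA, Or.inr h⟩
  have hall : ∀ A : Finset (Fin m), A.card ≤ (A.biUnion t).card := by
    intro A
    rcases A.eq_empty_or_nonempty with h | h
    · simp [h]
    rw [hbiU A h, card_union_of_disjoint (hdisj _),
      card_image_of_injective _ Sum.inl_injective,
      card_image_of_injective _ Sum.inr_injective, card_univ, Fintype.card_fin]
    have : g A ≤ δ := Finset.le_sup (mem_powerset.mpr (subset_univ A))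
    simp only [hg] at this
    omega
  obtain ⟨f, hfinj, hf⟩ := (Finset.all_card_le_biUnion_card_iff_exists_injective t).mp hall
  -- rows matched to real columns
  set R : Finset (Fin m) := univ.filter fun i => (f i).isLeft with hR
  have hRcard : m - δ ≤ R.card := by
    have h1 : (univ.filter fun i => ¬ (f i).isLeft).card ≤ δ := by
      have himg : ((univ.filter fun i => ¬ (f i).isLeft)).image f ⊆
          (univ : Finset (Fin δ)).image Sum.inr := by
        intro x hx
        simp only [mem_image, mem_filter] at hx
        obtain ⟨i, ⟨-, hi⟩, rfl⟩ := hx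
        obtain ⟨d, hd⟩ := Sum.isRight_iff.mp (Sum.not_isLeft.mp (by simpa using hi))
        rw [hd]
        exact mem_image.mpr ⟨d, mem_univ d, rfl⟩
      have := card_le_card himg
      rwa [card_image_of_injective _ hfinj,
        card_image_of_injective _ Sum.inr_injective, card_univ, Fintype.card_fin] at this
    have h2 : (univ.filter fun i => (f i).isLeft).card +
        (univ.filter fun i => ¬ (f i).isLeft).card = m := by
      rw [Finset.card_filter_add_card_filter_not, card_univ, Fintype.card_fin]
    have h3 : R.card = (univ.filter fun i => (f i).isLeft).card := by rw [hR]
    omega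
  -- the attained deficiency bounds |S|
  obtain ⟨A, -, hA⟩ := Finset.exists_mem_eq_sup (univ : Finset (Fin m)).powerset
    ⟨∅, mem_powerset.mpr (empty_subset _)⟩ g
  have hSsub : S ⊆ ((univ \ A) ×ˢ univ) ∪ (univ ×ˢ A.biUnion N) := by
    intro c hc
    by_cases hcA : c.1 ∈ A
    · refine mem_union_right _ (mem_product.mpr ⟨mem_univ _, ?_⟩)
      exact mem_biUnion.mpr ⟨c.1, hcA, mem_image.mpr ⟨c, mem_filter.mpr ⟨hc, rfl⟩, rfl⟩⟩
    · exact mem_union_left _ (mem_product.mpr ⟨mem_sdiff.mpr ⟨mem_univ _, hcA⟩, mem_univ _⟩)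
  have hSbound : S.card ≤ (m - A.card) * m + (A.biUnion N).card * m := by
    refine le_trans (card_le_card hSsub) (le_trans (card_union_le _ _) ?_)
    rw [card_product, card_product, card_sdiff_of_subset (subset_univ A), card_univ, Fintype.card_fin]
    have : (A.biUnion N).card ≤ m := le_trans (card_le_card (subset_univ _))
      (by rw [card_univ, Fintype.card_fin])
    nlinarith [card_le_card (subset_univ A)]
  -- s + δ < m
  have hsm : s + δ < m := by
    have hAm : A.card ≤ m := by
      have := card_le_card (subset_univ A)
      rwa [card_univ, Fintype.card_fin] at this
    have hδA : δ = A.card - (A.biUnion N).card := by rw [hδ, hA]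
    have hkey : s * m < ((m - A.card) + (A.biUnion N).card) * m := by
      rw [Nat.add_mul]; omega
    have hs : s < (m - A.card) + (A.biUnion N).card := by
      rcases Nat.eq_zero_or_pos m with rfl | hm
      · omega
      · exact Nat.lt_of_mul_lt_mul_right hkey
    by_cases hab : (A.biUnion N).card ≤ A.card
    · omega
    · -- δ = 0 and s < m suffices
      have hδ0 : δ = 0 := by omega
      have hsm' : s * m < m * m := lt_of_lt_of_le hcard (by
        have := card_le_card (subset_univ S)
        simpa [card_univ] using this)
      have : s < m := by
        rcases Nat.eq_zero_or_pos m with rfl | hm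
        · omega
        · exact Nat.lt_of_mul_lt_mul_right hsm'
      omega
  -- extract the matching
  have hR1 : s + 1 ≤ R.card := by omega
  obtain ⟨R', hR'sub, hR'card⟩ := Finset.exists_subset_card_eq hR1
  have e := R'.orderIsoOfFin hR'card
  have hcol : ∀ k : Fin (s + 1), ∃ j, f (e k : Fin m) = Sum.inl j ∧ ((e k : Fin m), j) ∈ S := by
    intro k
    have hmem : (e k : Fin m) ∈ R := hR'sub (e k).2
    rw [hR, mem_filter] at hmem
    obtain ⟨j, hj⟩ := Sum.isLeft_iff.mp hmem.2
    refine ⟨j, hj, ?_⟩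
    have := hf (e k : Fin m)
    rw [hj, ht] at this
    simp only [mem_union, mem_image] at this
    rcases this with ⟨j', hj', hjj⟩ | ⟨d, -, hd⟩
    · have hj'j : j' = j := Sum.inl_injective hjj
      rw [hN] at hj'
      simp only [mem_image, mem_filter] at hj'
      obtain ⟨c, ⟨hcS, hc1⟩, hc2⟩ := hj'
      have hceq : c = ((e k : Fin m), j) := Prod.ext hc1 (by rw [hc2, hj'j])
      rwa [hceq] at hcS
    · simp at hd
  refine ⟨fun k => ((e k : Fin m), Classical.choose (hcol k)), fun k => ?_, ?_, ?_⟩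
  · exact (Classical.choose_spec (hcol k)).2
  · intro k l h
    simp only at h
    have : e k = e l := Subtype.ext h
    exact e.injective this
  · intro k l h
    simp only at h
    have hk := (Classical.choose_spec (hcol k)).1
    have hl := (Classical.choose_spec (hcol l)).1
    have : f (e k : Fin m) = f (e l : Fin m) := by rw [hk, h, ← hl]
    exact e.injective (Subtype.ext (hfinj this))



/-- Echelon family: a subspace of dimension `d` of `ι → K` (with `ι` linearly ordered)
has `d` elements in reduced echelon form. -/
lemma echelon_family {ι : Type*} [Fintype ι] [LinearOrder ι]
    (d : ℕ) (V : Submodule K (ι → K)) (hd : Module.finrank K V = d) :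
    ∃ (B : Fin d → (ι → K)) (p : Fin d → ι),
      (∀ k, B k ∈ V) ∧ (∀ k, B k (p k) = 1) ∧
      (∀ k x, x < p k → B k x = 0) ∧ (∀ k l, k ≠ l → B k (p l) = 0) := by
  classical
  induction d generalizing V with
  | zero => exact ⟨Fin.elim0, Fin.elim0, fun k => k.elim0, fun k => k.elim0,
      fun k => k.elim0, fun k => k.elim0⟩
  | succ d ih =>
    have hVbot : V ≠ ⊥ := by
      intro h
      rw [h, finrank_bot] at hd
      omega
    obtain ⟨v, hvV, hv0⟩ := Submodule.exists_mem_ne_zero_of_ne_bot hVbot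
    set U : Finset ι := univ.filter (fun c => ∃ w ∈ V, w c ≠ 0) with hU
    have hUne : U.Nonempty := by
      have : ∃ c, v c ≠ 0 := by
        by_contra h
        push_neg at h
        exact hv0 (funext h)
      obtain ⟨c, hc⟩ := this
      exact ⟨c, mem_filter.mpr ⟨mem_univ _, v, hvV, hc⟩⟩
    set c₀ : ι := U.min' hUne with hc₀
    have hbelow : ∀ w ∈ V, ∀ c, c < c₀ → w c = 0 := by
      intro w hw c hc
      by_contra h
      exact absurd (U.min'_le c (mem_filter.mpr ⟨mem_univ _, w, hw, h⟩)) (not_le.mpr hc)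
    obtain ⟨-, u, huV, hu0⟩ := mem_filter.mp (U.min'_mem hUne)
    -- the evaluation at c₀ restricted to V is surjective
    set φ : V →ₗ[K] K := (LinearMap.proj c₀).comp V.subtype with hφ
    have hφsurj : LinearMap.range φ = ⊤ := by
      rw [LinearMap.range_eq_top]
      intro y
      refine ⟨(y / u c₀) • ⟨u, huV⟩, ?_⟩
      simp only [hφ, LinearMap.comp_apply, LinearMap.proj_apply]
      show (y / u c₀) * u c₀ = y
      field_simp
      exact mul_div_cancel_right₀ y hu0
    have hker : finrank K (LinearMap.ker φ) = d := by
      have := LinearMap.finrank_range_add_finrank_ker φ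
      rw [hφsurj, finrank_top, finrank_self, hd] at this
      omega
    set W : Submodule K (ι → K) := (LinearMap.ker φ).map V.subtype with hW
    have hWrank : finrank K W = d := by
      rw [hW, ← hker]
      exact ((Submodule.equivMapOfInjective V.subtype V.injective_subtype _).finrank_eq).symm
    have hWmem : ∀ w ∈ W, w ∈ V ∧ w c₀ = 0 := by
      rintro w ⟨⟨x, hx⟩, hk, rfl⟩
      refine ⟨hx, ?_⟩
      simpa [hφ] using hk
    obtain ⟨B', p', hB'V, hB'piv, hB'lead, hB'red⟩ := ih W hWrank
    have hB'Vmem : ∀ k, B' k ∈ V := fun k => (hWmem _ (hB'V k)).1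
    have hB'c₀ : ∀ k, B' k c₀ = 0 := fun k => (hWmem _ (hB'V k)).2
    -- construct the new head vector
    set v₀ : ι → K := (u c₀)⁻¹ • u with hv₀
    set B₀ : ι → K := v₀ - ∑ k, v₀ (p' k) • B' k with hB₀
    have hB₀V : B₀ ∈ V := by
      refine Submodule.sub_mem _ (Submodule.smul_mem _ _ huV) ?_
      exact Submodule.sum_mem _ fun k _ => Submodule.smul_mem _ _ (hB'Vmem k)
    have hB₀c₀ : B₀ c₀ = 1 := by
      simp only [hB₀, Pi.sub_apply, Finset.sum_apply, Pi.smul_apply, smul_eq_mul, hB'c₀,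
        mul_zero, Finset.sum_const_zero, sub_zero, hv₀]
      field_simp
      exact div_self hu0
    have hB₀p' : ∀ l, B₀ (p' l) = 0 := by
      intro l
      simp only [hB₀, Pi.sub_apply, Finset.sum_apply, Pi.smul_apply, smul_eq_mul]
      rw [Finset.sum_eq_single l]
      · rw [hB'piv l, mul_one, sub_self]
      · intro b _ hb
        rw [hB'red b l hb, mul_zero]
      · intro h
        exact absurd (mem_univ l) h
    have hB₀below : ∀ c, c < c₀ → B₀ c = 0 := by
      intro c hc
      have h1 : v₀ c = 0 := by
        simp only [hv₀, Pi.smul_apply, smul_eq_mul, hbelow u huV c hc, mul_zero]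
      simp only [hB₀, Pi.sub_apply, Finset.sum_apply, Pi.smul_apply, smul_eq_mul, h1,
        hbelow _ (hB'Vmem _) c hc, mul_zero, Finset.sum_const_zero, sub_zero]
    refine ⟨Fin.cons B₀ B', Fin.cons c₀ p', ?_, ?_, ?_, ?_⟩
    · intro k
      refine Fin.cases ?_ ?_ k
      · exact hB₀V
      · exact fun j => hB'Vmem j
    · intro k
      refine Fin.cases ?_ ?_ k
      · simpa using hB₀c₀
      · intro j; simpa using hB'piv j
    · intro k
      refine Fin.cases ?_ ?_ k
      · intro x hx; simpa using hB₀below x (by simpa using hx)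
      · intro j x hx
        simp only [Fin.cons_succ] at hx ⊢
        exact hB'lead j x hx
    · intro k l
      refine Fin.cases ?_ ?_ k <;> [skip; intro j] <;> refine Fin.cases ?_ ?_ l
      · intro h; exact absurd rfl h
      · intro j h; simpa using hB₀p' j
      · intro h; simpa using hB'c₀ j
      · intro j' h
        have : j ≠ j' := fun hj => h (by rw [hj])
        simpa using hB'red j j' this

/-- From an echelon family with pivots forming a matching, build a combination of
high rank. -/
lemma exists_high_rank {m q : ℕ} (B : Fin q → Matrix (Fin m) (Fin m) K)
    (rr cc : Fin q → Fin m) (hr : StrictMono rr) (hc : Function.Injective cc)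
    (hpiv : ∀ k, B k (rr k) (cc k) = 1)
    (hlead : ∀ k i j, (i < rr k ∨ (i = rr k ∧ j < cc k)) → B k i j = 0)
    (hred : ∀ k l, k ≠ l → B k (rr l) (cc l) = 0) :
    ∃ lam : Fin q → K, q ≤ (∑ a, lam a • B a).rank := by
  classical
  set crow : Fin q → Fin q → K := fun k l => B k (rr k) (cc l) with hcrow
  set Mfull : (Fin q → K) → Fin q → Fin q → K :=
    fun lam k l => ∑ a, lam a * B a (rr k) (cc l) with hMfull
  set Nmix : ℕ → (Fin q → K) → Matrix (Fin q) (Fin q) K :=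
    fun j lam => Matrix.of fun k l => if (k : ℕ) < j then Mfull lam k l else crow k l with hNmix
  have hzero : ∀ (a k : Fin q), k < a → ∀ l, B a (rr k) (cc l) = 0 := by
    intro a k hk l
    exact hlead a _ _ (Or.inl (hr hk))
  have hcrow_diag : ∀ k, crow k k = 1 := fun k => hpiv k
  have hcrow_zero : ∀ k l, cc l < cc k → crow k l = 0 := by
    intro k l h
    exact hlead k _ _ (Or.inr ⟨rfl, h⟩)
  -- base case : det of the pure pivot-row matrix is 1
  have hbase : ∀ lam, (Nmix 0 lam).det = 1 := by
    intro lam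
    have hσ : ∃ σ : Equiv.Perm (Fin q), StrictMono (cc ∘ σ) := by
      refine ⟨Tuple.sort cc, ?_⟩
      exact (Tuple.monotone_sort cc).strictMono_of_injective (hc.comp (Tuple.sort cc).injective)
    obtain ⟨σ, hσ⟩ := hσ
    rw [← Matrix.det_submatrix_equiv_self σ (Nmix 0 lam)]
    have htri : ((Nmix 0 lam).submatrix σ σ).BlockTriangular id := by
      intro a b hab
      simp only [Matrix.submatrix_apply, hNmix, Matrix.of_apply, id_eq] at hab ⊢
      rw [if_neg (by omega)]
      exact hcrow_zero _ _ (hσ hab)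
    rw [Matrix.det_of_upperTriangular htri]
    apply Finset.prod_eq_one
    intro a _
    simp only [Matrix.submatrix_apply, hNmix, Matrix.of_apply]
    rw [if_neg (by omega)]
    exact hcrow_diag _
  -- invariance of Nmix j under change of λ-coordinates ≥ j
  have hinv : ∀ (j : ℕ) (lam lam' : Fin q → K),
      (∀ a : Fin q, (a : ℕ) < j → lam a = lam' a) → Nmix j lam = Nmix j lam' := by
    intro j lam lam' hagree
    ext k l
    simp only [hNmix, Matrix.of_apply]
    by_cases hk : (k : ℕ) < j
    · rw [if_pos hk, if_pos hk]
      apply Finset.sum_congr rfl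
      intro a _
      by_cases hak : a ≤ k
      · rw [hagree a (lt_of_le_of_lt (by exact_mod_cast hak) hk)]
      · rw [hzero a k (by omega), mul_zero, mul_zero]
    · rw [if_neg hk, if_neg hk]
  -- induction step
  have hstep : ∀ j : ℕ, j < q → (∃ lam, (Nmix j lam).det ≠ 0) →
      ∃ lam, (Nmix (j + 1) lam).det ≠ 0 := by
    intro j hj ⟨lam, hlam⟩
    set jf : Fin q := ⟨j, hj⟩ with hjf
    have hupd : ∀ lam', Nmix (j + 1) lam' =
        Matrix.updateRow (Nmix j lam') jf (fun l => Mfull lam' jf l) := by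
      intro lam'
      ext k l
      by_cases hk : k = jf
      · subst hk
        rw [Matrix.updateRow_self]
        simp only [hNmix, Matrix.of_apply]
        rw [if_pos (by simp [hjf])]
      · rw [Matrix.updateRow_ne hk]
        simp only [hNmix, Matrix.of_apply]
        have : (k : ℕ) ≠ j := fun h => hk (Fin.ext (by simp [hjf, h]))
        by_cases h2 : (k : ℕ) < j
        · rw [if_pos (by omega), if_pos h2]
        · rw [if_neg (by omega), if_neg h2]
    have hrowdec : ∀ x : K, (fun l => Mfull (Function.update lam jf x) jf l) =
        x • (crow jf) + fun l => Mfull (Function.update lam jf 0) jf l := by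
      intro x
      funext l
      simp only [hMfull, Pi.add_apply, Pi.smul_apply, smul_eq_mul]
      rw [Finset.sum_eq_add_sum_sdiff_singleton_of_mem (mem_univ jf)
          (fun a => Function.update lam jf x a * B a (rr jf) (cc l)),
        Finset.sum_eq_add_sum_sdiff_singleton_of_mem (mem_univ jf)
          (fun a => Function.update lam jf 0 a * B a (rr jf) (cc l))]
      simp only [Function.update_self, zero_mul, zero_add]
      have : ∀ (y : K), ∑ a ∈ univ \ {jf}, Function.update lam jf y a * B a (rr jf) (cc l) =
          ∑ a ∈ univ \ {jf}, lam a * B a (rr jf) (cc l) := by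
        intro y
        apply Finset.sum_congr rfl
        intro a ha
        rw [Function.update_of_ne (by simp at ha; exact ha)]
      rw [this, this, hcrow]
    -- row jf of Nmix j is the pivot row
    have hrowjf : (Nmix j lam) jf = crow jf := by
      funext l
      simp only [hNmix, Matrix.of_apply]
      rw [if_neg (by simp [hjf])]
    have hdet : ∀ x : K, (Nmix (j + 1) (Function.update lam jf x)).det =
        x * (Nmix j lam).det +
          (Matrix.updateRow (Nmix j lam) jf
            (fun l => Mfull (Function.update lam jf 0) jf l)).det := by
      intro x
      have hjfval : (jf : ℕ) = j := rfl
      rw [hupd, hinv j (Function.update lam jf x) lam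
        (fun a ha => Function.update_of_ne (fun h => by rw [h] at ha; omega) _ _),
        hrowdec]
      rw [Matrix.det_updateRow_add, Matrix.det_updateRow_smul]
      congr 2
      rw [← hrowjf, Matrix.updateRow_eq_self]
    by_cases hD : (Matrix.updateRow (Nmix j lam) jf
        (fun l => Mfull (Function.update lam jf 0) jf l)).det = 0
    · exact ⟨Function.update lam jf 1, by rw [hdet 1, hD, one_mul, add_zero]; exact hlam⟩
    · exact ⟨Function.update lam jf 0, by rw [hdet 0, zero_mul, zero_add]; exact hD⟩
  -- iterate
  have hiter : ∀ j : ℕ, j ≤ q → ∃ lam, (Nmix j lam).det ≠ 0 := by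
    intro j
    induction j with
    | zero => exact fun _ => ⟨fun _ => 0, by rw [hbase]; exact one_ne_zero⟩
    | succ j ihj => exact fun hj => hstep j (by omega) (ihj (by omega))
  obtain ⟨lam, hlam⟩ := hiter q le_rfl
  refine ⟨lam, ?_⟩
  set A : Matrix (Fin m) (Fin m) K := ∑ a, lam a • B a with hA
  have hsub : Nmix q lam = A.submatrix rr cc := by
    ext k l
    simp only [hNmix, Matrix.of_apply, if_pos k.isLt, Matrix.submatrix_apply, hA, hMfull]
    rw [Matrix.sum_apply]
    exact Finset.sum_congr rfl fun a _ => by simp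
  have hNdet : (A.submatrix rr cc).det ≠ 0 := hsub ▸ hlam
  have hunit : IsUnit (A.submatrix rr cc) :=
    (Matrix.isUnit_iff_isUnit_det _).mpr (Ne.isUnit hNdet)
  have hind : LinearIndependent K (fun l : Fin q => fun x : Fin m => A x (cc l)) := by
    rw [Fintype.linearIndependent_iff]
    intro g hg
    have hmul : (A.submatrix rr cc).mulVec g = 0 := by
      funext k
      have h1 := congrFun hg (rr k)
      simp only [Finset.sum_apply, Pi.smul_apply, smul_eq_mul, Pi.zero_apply] at h1
      simp only [Matrix.mulVec, dotProduct, Matrix.submatrix_apply, Pi.zero_apply]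
      rw [← h1]
      exact Finset.sum_congr rfl fun l _ => mul_comm _ _
    have hinj := Matrix.mulVec_injective_iff_isUnit.mpr hunit
    intro l
    have : g = 0 := by
      apply hinj
      rw [hmul]
      funext k
      simp [Matrix.mulVec_zero]
    rw [this]
    rfl
  have hmem : ∀ l : Fin q, (fun x : Fin m => A x (cc l)) ∈ LinearMap.range A.mulVecLin := by
    intro l
    refine ⟨Pi.single (cc l) 1, ?_⟩
    rw [Matrix.mulVecLin_apply, Matrix.mulVec_single]
    funext x
    simp
  have := card_le_rank_of_mem_range A _ hmem hind
  simpa using this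

/-- **Flanders' theorem** (over an arbitrary field): a subspace of `m × m` matrices
all of whose elements have rank at most `s` has dimension at most `s * m`. -/
theorem flanders {m s : ℕ} (V : Submodule K ((Fin m × Fin m) → K))
    (h : ∀ v ∈ V, (Matrix.of fun i j => v (i, j)).rank ≤ s) :
    Module.finrank K V ≤ s * m := by
  classical
  by_contra hlt
  push_neg at hlt
  -- echelon family over the lexicographic order
  set d := Module.finrank K V with hdd
  obtain ⟨B, p, hBV, hpiv, hlead, hred⟩ :=
    echelon_family (ι := Lex (Fin m × Fin m)) d V rfl
  have hpinj : Function.Injective p := by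
    intro k l hkl
    by_contra hne
    have := hred k l hne
    rw [← hkl, hpiv k] at this
    exact one_ne_zero this
  -- pivot cells
  set S : Finset (Fin m × Fin m) := univ.image (fun k => ofLex (p k)) with hS
  have hoinj : Function.Injective (fun k : Fin d => ofLex (p k)) :=
    fun a b hab => hpinj (congrArg toLex hab)
  have hScard : s * m < S.card := by
    rw [hS, Finset.card_image_of_injective univ hoinj, card_univ, Fintype.card_fin]
    exact hlt
  obtain ⟨cell, hcellS, hfstinj, hsndinj⟩ := konig_matching S hScard
  -- index of each matched cell
  have hix : ∀ k, ∃ a : Fin d, ofLex (p a) = cell k := by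
    intro k
    have := hcellS k
    rw [hS, mem_image] at this
    obtain ⟨a, -, ha⟩ := this
    exact ⟨a, ha⟩
  set ix : Fin (s + 1) → Fin d := fun k => Classical.choose (hix k) with hixdef
  have hixp : ∀ k, ofLex (p (ix k)) = cell k := fun k => Classical.choose_spec (hix k)
  have hixinj : Function.Injective ix := by
    intro k l hkl
    apply hfstinj
    simp only [← hixp k, ← hixp l, hkl]
  -- sort by rows
  set σ := Tuple.sort (fun k => (cell k).1) with hσ
  have hmono : StrictMono (fun k => (cell (σ k)).1) :=
    (Tuple.monotone_sort _).strictMono_of_injective (hfstinj.comp σ.injective)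
  set B' : Fin (s + 1) → Matrix (Fin m) (Fin m) K :=
    fun k => Matrix.of fun i j => B (ix (σ k)) (toLex (i, j)) with hB'
  set rr : Fin (s + 1) → Fin m := fun k => (cell (σ k)).1 with hrr
  set cc : Fin (s + 1) → Fin m := fun k => (cell (σ k)).2 with hcc
  have hpix : ∀ k, p (ix (σ k)) = toLex (rr k, cc k) := by
    intro k
    have h2 := congrArg toLex (hixp (σ k))
    simp only [toLex_ofLex] at h2
    rw [h2, hrr, hcc]
  obtain ⟨lam, hrank⟩ := exists_high_rank B' rr cc hmono
    (hsndinj.comp σ.injective)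
    (fun k => by
      have := hpiv (ix (σ k))
      rwa [hpix k] at this)
    (fun k i j hij => by
      apply hlead (ix (σ k))
      rw [hpix k]
      exact Prod.Lex.lt_iff.mpr hij)
    (fun k l hkl => by
      have : ix (σ k) ≠ ix (σ l) := fun hc => hkl (σ.injective (hixinj hc))
      have h2 := hred (ix (σ k)) (ix (σ l)) this
      rw [hpix l] at h2
      exact h2)
  -- the combination is in V with too large a rank
  set v : (Fin m × Fin m) → K := ∑ a, lam a • B (ix (σ a)) with hv
  have hvV : v ∈ V := Submodule.sum_mem _ fun a _ => Submodule.smul_mem _ _ (hBV _)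
  have hmat : (Matrix.of fun i j => v (i, j)) = ∑ a, lam a • B' a := by
    ext i j
    rw [Matrix.sum_apply]
    simp only [Matrix.of_apply, hv, Finset.sum_apply, Pi.smul_apply, smul_eq_mul, hB',
      Matrix.smul_apply, Matrix.of_apply]
    exact Finset.sum_apply (i, j) univ (fun a => (lam a • B (ix (σ a)) : Fin m × Fin m → K))
  have := h v hvV
  rw [hmat] at this
  omega

/-- The contraction matrix of the matmul tensor dominates `n` copies of `v`. -/
lemma matmul_contract_rank_ge {n : ℕ} (v : (Fin n × Fin n) → K) :
    n * (Matrix.of fun i k : Fin n => v (k, i)).rank ≤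
      (Matrix.of fun p q : Fin n × Fin n =>
        if p.2 = q.1 then v (q.2, p.1) else 0).rank := by
  classical
  set W : Matrix (Fin n) (Fin n) K := Matrix.of fun i k : Fin n => v (k, i) with hW
  set M : Matrix (Fin n × Fin n) (Fin n × Fin n) K :=
    Matrix.of fun p q : Fin n × Fin n => if p.2 = q.1 then v (q.2, p.1) else 0 with hM
  set ρ := W.rank with hρ
  -- a linearly independent set of ρ columns of W
  have hspan : W.rank = finrank K (Submodule.span K (Set.range Wᵀ)) :=
    Matrix.rank_eq_finrank_span_cols W
  obtain ⟨b, hbsub, hbspan, hbind⟩ := exists_linearIndependent K (Set.range Wᵀ)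
  have hbfin : b.Finite := Set.Finite.subset (Set.finite_range _) hbsub
  haveI : Fintype b := hbfin.fintype
  have hbcard : b.toFinset.card = ρ := by
    rw [hρ, hspan, ← hbspan]
    exact (finrank_span_set_eq_card hbind).symm
  -- the independent family of columns of M
  set G : Fin n × b → ((Fin n × Fin n) → K) :=
    fun ju => fun p => if p.2 = ju.1 then (ju.2 : Fin n → K) p.1 else 0 with hG
  have hmem : ∀ ju, G ju ∈ LinearMap.range M.mulVecLin := by
    rintro ⟨j, u⟩
    obtain ⟨k, hk⟩ := hbsub u.2
    refine ⟨Pi.single (j, k) 1, ?_⟩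
    rw [Matrix.mulVecLin_apply, Matrix.mulVec_single]
    funext p
    simp only [hG, mul_one, hM, Matrix.of_apply]
    rw [← hk, MulOpposite.op_one, one_smul]
    rfl
  have hind : LinearIndependent K G := by
    rw [Fintype.linearIndependent_iff]
    intro g hg ju
    obtain ⟨j₀, u₀⟩ := ju
    -- evaluate at second coordinate j₀
    have hfun : ∑ u : b, g (j₀, u) • (u : Fin n → K) = 0 := by
      funext i
      have h1 := congrFun hg (i, j₀)
      simp only [Finset.sum_apply, Pi.smul_apply, smul_eq_mul, Pi.zero_apply, hG] at h1 ⊢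
      rw [Fintype.sum_prod_type] at h1
      have h2 : ∀ j : Fin n, (∑ u : b, g (j, u) * (if j₀ = j then (u : Fin n → K) i else 0))
          = if j = j₀ then ∑ u : b, g (j, u) * (u : Fin n → K) i else 0 := by
        intro j
        by_cases hj : j = j₀
        · subst hj; simp
        · simp [hj, Ne.symm hj]
      simp only [h2] at h1
      rw [Finset.sum_ite_eq' univ j₀] at h1
      simp only [mem_univ, if_true] at h1
      exact h1
    have := (Fintype.linearIndependent_iff.mp hbind) (fun u => g (j₀, u)) hfun
    exact this u₀
  have hcardb : Fintype.card b = ρ := by rw [← hbcard, Set.toFinset_card]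
  have := card_le_rank_of_mem_range M G hmem hind
  rwa [Fintype.card_prod, Fintype.card_fin, hcardb] at this

lemma hasFlatRankLE_of_hasSliceRankLE {X Y Z : Type*} [Fintype X] [Fintype Y] [Fintype Z]
    (F : X → Y → Z → K) (r : ℕ) (h : HasSliceRankLE K F r) : HasFlatRankLE K F r := by
  classical
  obtain ⟨T, hT, hsum⟩ := h
  set P : Fin r → Prop :=
    fun i => ∃ (f : Z → K) (g : X → Y → K), T i = fun x y z => f z * g x y with hP
  set F3 : Fin r → (Z → K) := fun i =>
    if h : P i then Classical.choose h else 0 with hF3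
  set G3 : Fin r → (X → Y → K) := fun i =>
    if h : P i then Classical.choose (Classical.choose_spec h) else 0 with hG3
  have hT3 : ∀ i, P i → T i = fun x y z => F3 i z * G3 i x y := by
    intro i hi
    simp only [hF3, hG3, dif_pos hi]
    exact Classical.choose_spec (Classical.choose_spec hi)
  set φ : Fin r → ((Z → K) →ₗ[K] K) :=
    fun i => ∑ z, F3 i z • (LinearMap.proj z : (Z → K) →ₗ[K] K) with hφ
  have hφapp : ∀ i v, φ i v = ∑ z, F3 i z * v z := by
    intro i v
    simp [hφ, LinearMap.sum_apply]
  set s3 : Finset (Fin r) := univ.filter P with hs3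
  set V : Submodule K (Z → K) := s3.inf fun i => LinearMap.ker (φ i) with hV
  refine ⟨V, (univ.filter fun i => ¬ P i).card, ?_, ?_⟩
  · intro v hv
    have hdecomp : contractZ F v = ∑ i, contractZ (T i) v := by
      ext x y
      simp only [contractZ, Matrix.of_apply, Matrix.sum_apply]
      rw [Finset.sum_comm]
      apply Finset.sum_congr rfl
      intro z _
      rw [hsum x y z, Finset.sum_mul]
    have hzero : ∀ i ∈ s3, contractZ (T i) v = 0 := by
      intro i hi
      have hPi : P i := (mem_filter.mp hi).2
      have hker : v ∈ LinearMap.ker (φ i) := by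
        have : V ≤ LinearMap.ker (φ i) := Finset.inf_le hi
        exact this hv
      ext x y
      rw [Matrix.zero_apply]
      simp only [contractZ, Matrix.of_apply, hT3 i hPi]
      have : ∑ z, F3 i z * G3 i x y * v z = G3 i x y * ∑ z, F3 i z * v z := by
        rw [Finset.mul_sum]
        exact Finset.sum_congr rfl fun z _ => by ring
      rw [this, ← hφapp i v, LinearMap.mem_ker.mp hker, mul_zero]
    have hsplit : contractZ F v = ∑ i ∈ univ.filter fun i => ¬ P i, contractZ (T i) v := by
      rw [hdecomp, ← Finset.sum_filter_add_sum_filter_not univ P]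
      rw [Finset.sum_congr rfl (fun i hi => hzero i hi), Finset.sum_const_zero, zero_add]
    rw [hsplit]
    refine le_trans (rank_sum_le' _ _) ?_
    have hone : ∀ i ∈ univ.filter fun i => ¬ P i, (contractZ (T i) v).rank ≤ 1 := by
      intro i hi
      have hnPi : ¬ P i := (mem_filter.mp hi).2
      rcases hT i with ⟨f, g, hfg⟩ | ⟨f, g, hfg⟩ | h3
      · have : contractZ (T i) v = Matrix.of fun x y => f x * ∑ z, g y z * v z := by
          ext x y
          simp only [contractZ, Matrix.of_apply, hfg, Finset.mul_sum]
          exact Finset.sum_congr rfl fun z _ => by ring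
        rw [this]
        exact rank_outer_le_one _ _
      · have : contractZ (T i) v = Matrix.of fun x y => (∑ z, g x z * v z) * f y := by
          ext x y
          simp only [contractZ, Matrix.of_apply, hfg, Finset.sum_mul]
          exact Finset.sum_congr rfl fun z _ => by ring
        rw [this]
        exact rank_outer_le_one _ _
      · exact absurd h3 hnPi
    calc ∑ i ∈ univ.filter fun i => ¬ P i, (contractZ (T i) v).rank
        ≤ ∑ _i ∈ univ.filter fun i => ¬ P i, 1 := Finset.sum_le_sum hone
      _ = (univ.filter fun i => ¬ P i).card := by rw [Finset.sum_const, smul_eq_mul, mul_one]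
  · have hcodim := finrank_le_finset_inf_ker s3 φ
    have hZ : finrank K (Z → K) = Fintype.card Z := by
      rw [Module.finrank_pi]
    have hcards : s3.card + (univ.filter fun i => ¬ P i).card = r := by
      rw [hs3, Finset.card_filter_add_card_filter_not, card_univ, Fintype.card_fin]
    have hVfin : finrank K (s3.inf fun i => LinearMap.ker (φ i) : Submodule K (Z → K)) =
        finrank K V := by rw [hV]
    rw [hZ, hVfin] at hcodim
    omega

end Aux

open Module Matrix Finset

/-- The flat rank and slice rank of the `n × n` matrix multiplication tensor
`⟨n,n,n⟩` (in the basis of matrix units) are both `n^2`. -/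
theorem flatRank_sliceRank_matmul {K : Type*} [Field K] (n : ℕ) :
    flatRank K (fun p q r : Fin n × Fin n =>
      if p.2 = q.1 ∧ q.2 = r.1 ∧ r.2 = p.1 then (1 : K) else 0) = n ^ 2 ∧
    sliceRank K (fun p q r : Fin n × Fin n =>
      if p.2 = q.1 ∧ q.2 = r.1 ∧ r.2 = p.1 then (1 : K) else 0) = n ^ 2 := by
  classical
  set t : (Fin n × Fin n) → (Fin n × Fin n) → (Fin n × Fin n) → K :=
    fun p q r => if p.2 = q.1 ∧ q.2 = r.1 ∧ r.2 = p.1 then (1 : K) else 0 with ht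
  have hpow : n ^ 2 = n * n := sq n
  have hcardZ : Fintype.card (Fin n × Fin n) = n * n := by
    rw [Fintype.card_prod, Fintype.card_fin]
  -- computation of the contraction
  have hcontract : ∀ v : (Fin n × Fin n) → K,
      contractZ t v = Matrix.of fun p q : Fin n × Fin n =>
        if p.2 = q.1 then v (q.2, p.1) else 0 := by
    intro v
    ext p q
    simp only [contractZ, Matrix.of_apply, ht]
    by_cases hpq : p.2 = q.1
    · rw [if_pos hpq]
      have hiff : ∀ z : Fin n × Fin n,
          (p.2 = q.1 ∧ q.2 = z.1 ∧ z.2 = p.1) ↔ z = (q.2, p.1) := by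
        intro z
        constructor
        · rintro ⟨-, h1, h2⟩
          exact Prod.ext h1.symm h2
        · rintro rfl
          exact ⟨hpq, rfl, rfl⟩
      calc ∑ z, (if p.2 = q.1 ∧ q.2 = z.1 ∧ z.2 = p.1 then (1:K) else 0) * v z
          = ∑ z, (if z = (q.2, p.1) then v z else 0) := by
            apply Finset.sum_congr rfl
            intro z _
            by_cases hz : z = (q.2, p.1)
            · rw [if_pos ((hiff z).mpr hz), if_pos hz, one_mul]
            · rw [if_neg (fun hc => hz ((hiff z).mp hc)), if_neg hz, zero_mul]
        _ = v (q.2, p.1) := by rw [Finset.sum_ite_eq' univ (q.2, p.1) v]; simp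
    · rw [if_neg hpq]
      apply Finset.sum_eq_zero
      intro z _
      rw [if_neg (fun hc => hpq hc.1), zero_mul]
  -- lower bound for flat rank
  have hflatlow : ∀ ℓ, HasFlatRankLE K t ℓ → n ^ 2 ≤ ℓ := by
    rintro ℓ ⟨V, r, hrk, hle⟩
    have hVle : finrank K V ≤ finrank K ((Fin n × Fin n) → K) := Submodule.finrank_le V
    have hWfull : finrank K ((Fin n × Fin n) → K) = n * n := by
      rw [Module.finrank_pi, hcardZ]
    have hfV : finrank K V ≤ r := by
      rcases Nat.eq_zero_or_pos n with rfl | hn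
      · omega
      · set E : ((Fin n × Fin n) → K) ≃ₗ[K] ((Fin n × Fin n) → K) :=
          LinearEquiv.funCongrLeft K K (Equiv.prodComm (Fin n) (Fin n)) with hE
        have hflan : finrank K (V.map E.toLinearMap) ≤ (r / n) * n := by
          apply flanders
          rintro - ⟨v, hvV, rfl⟩
          have hrk2 := hrk v hvV
          rw [hcontract v] at hrk2
          have hD := matmul_contract_rank_ge (K := K) (n := n) v
          have hmn : n * (Matrix.of fun i k : Fin n => v (k, i)).rank ≤ r := le_trans hD hrk2
          have : (Matrix.of fun i j : Fin n => E.toLinearMap v (i, j)) =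
              (Matrix.of fun i k : Fin n => v (k, i)) := by
            ext i j
            rfl
          rw [this]
          rw [Nat.le_div_iff_mul_le hn, mul_comm]
          exact hmn
        have hEq : finrank K (V.map E.toLinearMap) = finrank K V :=
          LinearEquiv.finrank_map_eq E V
        have := Nat.div_mul_le_self r n
        omega
    omega
  -- upper bound for flat rank
  have hflatup : HasFlatRankLE K t (n ^ 2) := by
    refine ⟨⊥, 0, ?_, ?_⟩
    · intro v hv
      rw [Submodule.mem_bot] at hv
      subst hv
      have : contractZ t (0 : (Fin n × Fin n) → K) = 0 := by
        ext p q
        simp [contractZ]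
      rw [this, Matrix.rank_zero]
    · rw [finrank_bot]
      omega
  have hflat : flatRank K t = n ^ 2 :=
    le_antisymm (Nat.sInf_le hflatup) (le_csInf ⟨_, hflatup⟩ hflatlow)
  -- upper bound for slice rank
  have hsliceup : HasSliceRankLE K t (n ^ 2) := by
    set e : Fin (n ^ 2) ≃ Fin n × Fin n := (finCongr hpow).trans finProdFinEquiv.symm with he
    refine ⟨fun i x y z => (if x = e i then 1 else 0) * t (e i) y z, fun i => ?_, ?_⟩
    · exact Or.inl ⟨fun x => if x = e i then 1 else 0, fun y z => t (e i) y z, rfl⟩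
    · intro x y z
      have : ∀ i : Fin (n ^ 2), (if x = e i then (1:K) else 0) * t (e i) y z =
          (fun c => if x = c then t c y z else 0) (e i) := by
        intro i
        by_cases hx : x = e i
        · rw [if_pos hx, one_mul, hx]
          simp
        · rw [if_neg hx, zero_mul]
          simp [hx]
      rw [Finset.sum_congr rfl fun i _ => this i]
      refine Eq.symm ((Equiv.sum_comp e fun c => if x = c then t c y z else 0).trans ?_)
      rw [Finset.sum_ite_eq univ x fun c => t c y z]
      simp
  have hslicelow : ∀ r', HasSliceRankLE K t r' → n ^ 2 ≤ r' := fun r' h =>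
    hflatlow r' (hasFlatRankLE_of_hasSliceRankLE t r' h)
  exact ⟨hflat, le_antisymm (Nat.sInf_le hsliceup) (le_csInf ⟨_, hsliceup⟩ hslicelow)⟩
end

section
/- Let p be prime and G = Z/p^r Z. The flat rank of the multiplication tensor of the group algebra F_p[G] equals |G| = p^r. -/
open Finsupp Module
namespace FlatRankAux
variable (p r : ℕ) [hp : Fact p.Prime] [NeZero (p ^ r)]

abbrev Gg (p r : ℕ) := ZMod (p ^ r)
abbrev Kk (p : ℕ) := ZMod p
abbrev Aa (p r : ℕ) := AddMonoidAlgebra (ZMod p) (ZMod (p ^ r))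

omit [NeZero (p ^ r)] in
lemma charA : CharP (Aa p r) p :=
  charP_of_injective_ringHom (f := AddMonoidAlgebra.singleZeroRingHom)
    (fun a b h => by simpa using AddMonoidAlgebra.single_right_injective (m := (0 : Gg p r)) h) p

noncomputable def tt : Aa p r := AddMonoidAlgebra.single 1 1 - 1

lemma tt_pow_n : tt p r ^ (p ^ r) = 0 := by
  have := charA p r
  rw [tt, sub_pow_char_pow, AddMonoidAlgebra.single_pow, one_pow,
    show ((p^r : ℕ) • (1 : Gg p r)) = 0 by simp, one_pow]
  simp [AddMonoidAlgebra.one_def]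

lemma mul_tt_apply (f : Aa p r) (g : Gg p r) : (f * tt p r).coeff g = f.coeff (g - 1) - f.coeff g := by
  rw [tt, mul_sub, mul_one, AddMonoidAlgebra.coeff_sub, Finsupp.sub_apply, AddMonoidAlgebra.coeff_mul_single_apply, mul_one, sub_eq_add_neg g 1]

lemma tri : ∀ (i : ℕ) (g : Gg p r), i < g.val → (tt p r ^ i).coeff g = 0
  | 0, g, h => by
    have hg : g ≠ 0 := by
      intro e; rw [e, ZMod.val_zero] at h; omega
    rw [pow_zero, AddMonoidAlgebra.one_def]
    exact Finsupp.single_eq_of_ne (fun e => hg e)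
  | i + 1, g, h => by
    have hvlt : g.val < p ^ r := ZMod.val_lt g
    have h1 : g - 1 = ((g.val - 1 : ℕ) : Gg p r) := by
      have key : ((g.val - 1 : ℕ) : Gg p r) + 1 = g := by
        have e : ((g.val - 1 : ℕ) : Gg p r) + ((1:ℕ) : Gg p r) = ((g.val - 1 + 1 : ℕ) : Gg p r) :=
          (Nat.cast_add _ _).symm
        rw [Nat.cast_one] at e
        rw [e, show g.val - 1 + 1 = g.val from by omega, ZMod.natCast_val, ZMod.cast_id]
      exact (eq_sub_of_add_eq key).symm
    have hv1 : (g - 1).val = g.val - 1 := by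
      rw [h1, ZMod.val_cast_of_lt (by omega)]
    rw [pow_succ, mul_tt_apply, tri i g (by omega), tri i (g-1) (by omega), sub_zero]

lemma diag : ∀ (i : ℕ), i < p ^ r → (tt p r ^ i).coeff ((i : ℕ) : Gg p r) = 1
  | 0, _ => by
    rw [pow_zero, AddMonoidAlgebra.one_def]
    simp
  | i + 1, h => by
    have e1 : (((i+1 : ℕ)) : Gg p r) - 1 = ((i : ℕ) : Gg p r) := by push_cast; ring
    have e2 : (((i+1 : ℕ)) : Gg p r).val = i + 1 := ZMod.val_cast_of_lt h
    rw [pow_succ, mul_tt_apply, e1, diag i (by omega), tri p r i _ (by omega), sub_zero]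



noncomputable def ee : (Gg p r → ZMod p) ≃ₗ[ZMod p] Aa p r :=
  (Finsupp.linearEquivFunOnFinite (ZMod p) (ZMod p) (Gg p r)).symm.trans
    (AddMonoidAlgebra.coeffLinearEquiv (ZMod p)).symm

lemma ee_apply (f : Gg p r → ZMod p) (g : Gg p r) : (ee p r f).coeff g = f g := rfl
lemma ee_symm_apply (a : Aa p r) (g : Gg p r) : (ee p r).symm a g = a.coeff g := rfl

lemma finrankA : finrank (ZMod p) (Aa p r) = p ^ r := by
  rw [← (ee p r).finrank_eq, Module.finrank_pi, ZMod.card]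

noncomputable def Phi : Aa p r →ₗ[ZMod p] (Fin (p ^ r) → ZMod p) where
  toFun a := fun m => a.coeff ((m : ℕ) : Gg p r)
  map_add' := by intros; funext m; exact Finsupp.add_apply _ _ _
  map_smul' := by intros; funext m; exact Finsupp.smul_apply _ _ _


end FlatRankAux

namespace FlatRankAux
variable (p r : ℕ) [hp : Fact p.Prime] [NeZero (p ^ r)]

noncomputable def Pmat : Matrix (Fin (p ^ r)) (Fin (p ^ r)) (ZMod p) :=
  Matrix.of fun m i => (tt p r ^ (i : ℕ)).coeff ((m : ℕ) : Gg p r)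

lemma Pmat_isUnit : IsUnit (Pmat p r) := by
  rw [Matrix.isUnit_iff_isUnit_det,
    Matrix.det_of_upperTriangular (M := Pmat p r) (fun i j h => by
      exact tri p r (j : ℕ) _ (by rw [ZMod.val_cast_of_lt i.isLt]; exact h))]
  have : ∀ i : Fin (p ^ r), Pmat p r i i = 1 := fun i => diag p r (i : ℕ) i.isLt
  simp [this]

lemma li : LinearIndependent (ZMod p) (fun i : Fin (p ^ r) => tt p r ^ (i : ℕ)) := by
  apply LinearIndependent.of_comp (Phi p r)
  exact Matrix.linearIndependent_cols_iff_isUnit.mpr (Pmat_isUnit p r)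

noncomputable def BB : Basis (Fin (p ^ r)) (ZMod p) (Aa p r) :=
  haveI : Nonempty (Fin (p ^ r)) := ⟨⟨0, Nat.pos_of_ne_zero (NeZero.ne _)⟩⟩
  basisOfLinearIndependentOfCardEqFinrank (li p r)
    (by rw [Fintype.card_fin, finrankA])

lemma BB_apply (i : Fin (p ^ r)) : BB p r i = tt p r ^ (i : ℕ) := by
  simp [BB, coe_basisOfLinearIndependentOfCardEqFinrank]

lemma pow_eq (j : ℕ) : tt p r ^ j =
    if h : j < p ^ r then BB p r ⟨j, h⟩ else 0 := by
  split
  · rw [BB_apply]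
  · rw [show j = p ^ r + (j - p ^ r) from by omega, pow_add, tt_pow_n, zero_mul]

lemma repr_pow (j : ℕ) : (BB p r).repr (tt p r ^ j) =
    if h : j < p ^ r then Finsupp.single ⟨j, h⟩ 1 else 0 := by
  rw [pow_eq]
  split
  · exact (BB p r).repr_self _
  · exact map_zero _


lemma repr_mul_pow (v : Aa p r) (i : ℕ) (m : Fin (p ^ r)) :
    (BB p r).repr (v * tt p r ^ i) m =
      if h : i ≤ (m : ℕ) then (BB p r).repr v ⟨(m : ℕ) - i, by omega⟩ else 0 := by
  conv_lhs => rw [← (BB p r).sum_repr v]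
  rw [Finset.sum_mul]
  have hterm : ∀ k : Fin (p ^ r),
      ((BB p r).repr v k • BB p r k) * tt p r ^ i
        = (BB p r).repr v k • tt p r ^ ((k : ℕ) + i) := by
    intro k
    rw [smul_mul_assoc, BB_apply, ← pow_add]
  simp only [hterm]
  rw [map_sum, Finsupp.finset_sum_apply]
  have hterm2 : ∀ k : Fin (p ^ r),
      ((BB p r).repr ((BB p r).repr v k • tt p r ^ ((k : ℕ) + i))) m
        = (BB p r).repr v k *
            (if hki : (k : ℕ) + i < p ^ r then (if (⟨(k:ℕ)+i, hki⟩ : Fin (p^r)) = m then 1 else 0) else 0) := by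
    intro k
    rw [map_smul, Finsupp.smul_apply, repr_pow, smul_eq_mul]
    congr 1
    split
    · rw [Finsupp.single_apply]
    · rfl
  simp only [hterm2]
  split
  · next h =>
    rw [Finset.sum_eq_single (⟨(m : ℕ) - i, by omega⟩ : Fin (p ^ r))]
    · rw [dif_pos (by omega : (m : ℕ) - i + i < p ^ r), if_pos (by apply Fin.ext; simp; omega),
        mul_one]
    · intro k _ hk
      rcases Nat.lt_or_ge ((k : ℕ) + i) (p ^ r) with hki | hki
      · rw [dif_pos hki]
        rw [if_neg, mul_zero]
        intro e
        apply hk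
        apply Fin.ext
        have : (k : ℕ) + i = (m : ℕ) := by
          have := congrArg (Fin.val) e; simpa using this
        simp; omega
      · rw [dif_neg (by omega), mul_zero]
    · intro hmem; exact absurd (Finset.mem_univ _) hmem
  · next h =>
    apply Finset.sum_eq_zero
    intro k _
    rcases Nat.lt_or_ge ((k : ℕ) + i) (p ^ r) with hki | hki
    · rw [dif_pos hki, if_neg, mul_zero]
      intro e
      have : (k : ℕ) + i = (m : ℕ) := by
        have := congrArg (Fin.val) e; simpa using this
      omega
    · rw [dif_neg (by omega), mul_zero]


noncomputable def Psi (j : ℕ) (hj : j < p ^ r) :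
    Aa p r →ₗ[ZMod p] (Fin (p ^ r - j) → ZMod p) where
  toFun a := fun i' => (BB p r).repr a ⟨j + (i' : ℕ), by omega⟩
  map_add' := by intros; funext i'; simp
  map_smul' := by intros; funext i'; simp

lemma key_li (v : Aa p r) (j : ℕ) (hj : j < p ^ r)
    (hz : ∀ k : Fin (p ^ r), (k : ℕ) < j → (BB p r).repr v k = 0)
    (hnz : (BB p r).repr v ⟨j, hj⟩ ≠ 0) :
    LinearIndependent (ZMod p) (fun i : Fin (p ^ r - j) => v * tt p r ^ (i : ℕ)) := by
  apply LinearIndependent.of_comp (Psi p r j hj)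
  have hN : IsUnit (Matrix.of fun i' i : Fin (p ^ r - j) =>
      (BB p r).repr (v * tt p r ^ (i : ℕ)) ⟨j + (i' : ℕ), by omega⟩) := by
    set N := (Matrix.of fun i' i : Fin (p ^ r - j) =>
      (BB p r).repr (v * tt p r ^ (i : ℕ)) ⟨j + (i' : ℕ), by omega⟩) with hNdef
    rw [Matrix.isUnit_iff_isUnit_det,
      Matrix.det_of_lowerTriangular N (fun i' i h => by
        have hlt : (i' : ℕ) < (i : ℕ) := OrderDual.toDual_lt_toDual.mp h
        show (BB p r).repr (v * tt p r ^ (i : ℕ)) ⟨j + (i' : ℕ), by omega⟩ = 0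
        rw [repr_mul_pow]
        split
        · next hle =>
          simp only [Fin.val_mk] at hle
          exact hz _ (by simp only [Fin.val_mk]; omega)
        · rfl)]
    rw [isUnit_iff_ne_zero, Finset.prod_ne_zero_iff]
    intro i _
    show (BB p r).repr (v * tt p r ^ (i : ℕ)) ⟨j + (i : ℕ), by omega⟩ ≠ 0
    rw [repr_mul_pow, dif_pos (by simp)]
    convert hnz using 3
    simp
  exact Matrix.linearIndependent_cols_iff_isUnit.mpr hN


lemma mul_apply_fintype (f g : Aa p r) (x : Gg p r) :
    (f * g).coeff x = ∑ a : Gg p r, f.coeff a * g.coeff (x - a) := by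
  classical
  rw [AddMonoidAlgebra.coeff_mul]
  rw [Finsupp.sum_fintype _ _ (fun a => by simp)]
  apply Finset.sum_congr rfl
  intro a _
  rw [Finsupp.sum_fintype _ _ (fun b => by simp)]
  rw [Finset.sum_eq_single (x - a)]
  · simp
  · intro b _ hb
    rw [if_neg]
    intro e
    exact hb (by rw [← e]; ring)
  · intro h; exact absurd (Finset.mem_univ _) h

/-- The multiplication tensor. -/
abbrev TT (p r : ℕ) : Gg p r → Gg p r → Gg p r → ZMod p :=
  fun g h k => if g + h = k then (1 : ZMod p) else 0

noncomputable def flipE : (Gg p r → ZMod p) ≃ₗ[ZMod p] (Gg p r → ZMod p) :=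
  LinearEquiv.funCongrLeft (ZMod p) (ZMod p) (Equiv.neg (Gg p r))

lemma flipE_apply (w : Gg p r → ZMod p) (g : Gg p r) : flipE p r w g = w (-g) := rfl

lemma contract_mulVecLin (v : Gg p r → ZMod p) :
    (contractZ (TT p r) v).mulVecLin =
      ((ee p r).symm.toLinearMap ∘ₗ LinearMap.mulLeft (ZMod p) (ee p r v)) ∘ₗ
        ((ee p r).toLinearMap ∘ₗ (flipE p r).toLinearMap) := by
  apply LinearMap.ext
  intro w
  funext g
  have lhs : (contractZ (TT p r) v).mulVecLin w g = ∑ h : Gg p r, v (g + h) * w h := by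
    rw [Matrix.mulVecLin_apply]
    show ∑ h, contractZ (TT p r) v g h * w h = _
    apply Finset.sum_congr rfl
    intro h _
    congr 1
    show (∑ k : Gg p r, (if g + h = k then (1 : ZMod p) else 0) * v k) = v (g + h)
    rw [Finset.sum_eq_single (g + h)]
    · simp
    · intro k _ hk; rw [if_neg (fun e => hk e.symm), zero_mul]
    · intro h; exact absurd (Finset.mem_univ _) h
  rw [lhs]
  show _ = ((ee p r).symm ((ee p r v) * (ee p r (flipE p r w)))) g
  rw [ee_symm_apply, mul_apply_fintype]
  refine Fintype.sum_equiv (Equiv.addLeft g) _ _ (fun h => ?_)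
  show v (g + h) * w h = (ee p r v).coeff (g + h) * (ee p r (flipE p r w)).coeff (g - (g + h))
  rw [ee_apply, ee_apply, flipE_apply]
  congr 2
  ring

lemma rank_eq_mulLeft (v : Gg p r → ZMod p) :
    (contractZ (TT p r) v).rank =
      finrank (ZMod p) (LinearMap.range (LinearMap.mulLeft (ZMod p) (ee p r v))) := by
  rw [Matrix.rank, contract_mulVecLin, LinearMap.range_comp_of_range_eq_top, LinearMap.range_comp]
  · exact LinearEquiv.finrank_map_eq _ _
  · rw [LinearMap.range_comp, LinearEquiv.range, Submodule.map_top, LinearEquiv.range]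


lemma rank_lower (v : Gg p r → ZMod p) (j : ℕ) (hj : j < p ^ r)
    (hz : ∀ k : Fin (p ^ r), (k : ℕ) < j → (BB p r).repr (ee p r v) k = 0)
    (hnz : (BB p r).repr (ee p r v) ⟨j, hj⟩ ≠ 0) :
    p ^ r - j ≤ (contractZ (TT p r) v).rank := by
  classical
  rw [rank_eq_mulLeft]
  haveI : Module.Finite (ZMod p) (Aa p r) := Module.Finite.of_basis (BB p r)
  set Rg := LinearMap.range (LinearMap.mulLeft (ZMod p) (ee p r v)) with hRg
  have hmem' : ∀ i : Fin (p ^ r - j), (ee p r v) * tt p r ^ (i : ℕ) ∈ Rg :=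
    fun i => ⟨tt p r ^ (i : ℕ), rfl⟩
  have hli : LinearIndependent (ZMod p)
      (fun i : Fin (p ^ r - j) => (⟨_, hmem' i⟩ : Rg)) := by
    apply LinearIndependent.of_comp Rg.subtype
    exact key_li p r (ee p r v) j hj hz hnz
  simpa using hli.fintype_card_le_finrank

end FlatRankAux


open FlatRankAux in
/-- For `G = Z/p^r Z` (written additively), the flat rank of the
multiplication tensor of the group algebra `F_p[G]` (in the group-element
basis) equals `|G| = p^r`. -/
theorem flatRank_cyclic_pGroup (p r : ℕ) [hp : Fact p.Prime] [NeZero (p ^ r)] :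
    flatRank (ZMod p)
      (fun g h k : ZMod (p ^ r) => if g + h = k then (1 : ZMod p) else 0) =
      p ^ r := by
  classical
  have hmem : HasFlatRankLE (ZMod p)
      (fun g h k : ZMod (p ^ r) => if g + h = k then (1 : ZMod p) else 0) (p ^ r) := by
    refine ⟨⊥, 0, ?_, ?_⟩
    · intro v hv
      rw [Submodule.mem_bot] at hv
      subst hv
      have h0 : contractZ (fun g h k : ZMod (p ^ r) =>
          if g + h = k then (1 : ZMod p) else 0) (0 : ZMod (p ^ r) → ZMod p) = 0 := by
        funext g h
        simp [contractZ]
      rw [h0, Matrix.rank_zero]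
    · simp [finrank_bot, ZMod.card]
  have hlow : ∀ ℓ, HasFlatRankLE (ZMod p)
      (fun g h k : ZMod (p ^ r) => if g + h = k then (1 : ZMod p) else 0) ℓ → p ^ r ≤ ℓ := by
    rintro ℓ ⟨V, r', h1, h2⟩
    rw [ZMod.card] at h2
    haveI : Module.Finite (ZMod p) (ZMod (p ^ r) → ZMod p) := inferInstance
    have hVn : Module.finrank (ZMod p) V ≤ p ^ r := by
      have h := Submodule.finrank_le V
      rwa [Module.finrank_pi, ZMod.card] at h
    have hd : Module.finrank (ZMod p) V ≤ r' := by
      set S : Finset (Fin (p ^ r)) := Finset.univ.filter (fun i => p ^ r - r' ≤ (i : ℕ)) with hS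
      set W : Submodule (ZMod p) (ZMod (p ^ r) → ZMod p) :=
        Submodule.span (ZMod p)
          ((S.image (fun i => (ee p r).symm (BB p r i)) : Finset _) : Set _) with hW
      have hWr : Module.finrank (ZMod p) W ≤ r' := by
        refine le_trans (finrank_span_finset_le_card _) ?_
        refine le_trans (Finset.card_image_le) ?_
        have : S.card ≤ (Finset.range r').card := by
          refine Finset.card_le_card_of_injOn (fun i => (i : ℕ) - (p ^ r - r')) ?_ ?_
          · intro i hi
            rw [Finset.mem_coe, Finset.mem_filter] at hi
            rw [Finset.mem_coe, Finset.mem_range]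
            show (i : ℕ) - (p ^ r - r') < r'
            have := i.isLt
            omega
          · intro i hi i' hi' he
            rw [Finset.mem_coe, Finset.mem_filter] at hi hi'
            have he' : (i : ℕ) - (p ^ r - r') = (i' : ℕ) - (p ^ r - r') := he
            apply Fin.ext
            have := i.isLt
            have := i'.isLt
            omega
        simpa using this
      have hVW : V ≤ W := by
        intro v hv
        by_cases hcase : ∀ i : Fin (p ^ r), (i : ℕ) < p ^ r - r' →
            (BB p r).repr (ee p r v) i = 0
        · have hv' : v = ∑ i : Fin (p ^ r),
              (BB p r).repr (ee p r v) i • (ee p r).symm (BB p r i) := by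
            have hsum := (BB p r).sum_repr (ee p r v)
            have := congrArg (ee p r).symm hsum
            rw [map_sum] at this
            simp only [map_smul] at this
            rw [LinearEquiv.symm_apply_apply] at this
            exact this.symm
          rw [hv']
          apply Submodule.sum_mem
          intro i _
          by_cases hi : p ^ r - r' ≤ (i : ℕ)
          · refine Submodule.smul_mem _ _ (Submodule.subset_span ?_)
            refine Finset.mem_coe.2 (Finset.mem_image_of_mem _ ?_)
            rw [hS, Finset.mem_filter]
            exact ⟨Finset.mem_univ _, hi⟩
          · rw [hcase i (by omega), zero_smul]
            exact Submodule.zero_mem _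
        · exfalso
          push_neg at hcase
          obtain ⟨i₀, hi₀, hne⟩ := hcase
          have hex : ∃ j : ℕ, ∃ hj : j < p ^ r,
              (BB p r).repr (ee p r v) ⟨j, hj⟩ ≠ 0 :=
            ⟨(i₀ : ℕ), i₀.isLt, by simpa using hne⟩
          obtain ⟨hj, hjne⟩ := Nat.find_spec hex
          have hjle : Nat.find hex ≤ (i₀ : ℕ) :=
            Nat.find_le ⟨i₀.isLt, by simpa using hne⟩
          have hjmin : ∀ k : Fin (p ^ r), (k : ℕ) < Nat.find hex →
              (BB p r).repr (ee p r v) k = 0 := by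
            intro k hk
            by_contra hkne
            exact Nat.find_min hex hk ⟨k.isLt, by simpa using hkne⟩
          have hrk := rank_lower p r v (Nat.find hex) hj hjmin hjne
          have hrk2 : (contractZ (TT p r) v).rank ≤ r' := h1 v hv
          omega
      have := Submodule.finrank_mono hVW
      omega
    omega
  apply le_antisymm
  · exact Nat.sInf_le hmem
  · exact le_csInf ⟨_, hmem⟩ (fun ℓ hℓ => hlow ℓ hℓ)
end

section
/- For any cyclic group G = Z/nZ and any field F, the slice rank of the multiplication tensor of G over F equals |G| = n. -/
open Finset Module

lemma zmod_bij (n : ℕ) [NeZero n] : Function.Bijective (fun i : Fin n => ((i : ℕ) : ZMod n)) := by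
  constructor
  · intro a b hab
    have := congrArg ZMod.val hab
    simpa [ZMod.val_cast_of_lt a.2, ZMod.val_cast_of_lt b.2, Fin.ext_iff] using this
  · intro x
    exact ⟨⟨x.val, ZMod.val_lt x⟩, ZMod.natCast_rightInverse x⟩

lemma upper_aux {K : Type*} [Field K] (n : ℕ) [NeZero n] :
    HasSliceRankLE K (fun g h k : ZMod n => if g + h = k then (1 : K) else 0) n := by
  classical
  refine ⟨fun i => fun x y z =>
      (if z = ((i : ℕ) : ZMod n) then (1 : K) else 0) *
      (if x + y = ((i : ℕ) : ZMod n) then (1 : K) else 0),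
    fun i => Or.inr (Or.inr ⟨_, _, rfl⟩), ?_⟩
  intro x y z
  rw [Fintype.sum_bijective _ (zmod_bij n)
    _ (fun k : ZMod n => (if z = k then (1 : K) else 0) * (if x + y = k then (1 : K) else 0))
    (fun i => rfl)]
  rw [Finset.sum_eq_single z]
  · simp [eq_comm]
  · intro k _ hk
    simp [Ne.symm hk]
  · simp

theorem lower_aux {K : Type*} [Field K] (n r : ℕ) [NeZero n] (hr : r < n)
    (h : HasSliceRankLE K (fun g h k : ZMod n => if g + h = k then (1 : K) else 0) r) :
    False := by
  classical
  obtain ⟨T, hT, hsum⟩ := h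
  -- classification of slices
  set P : Fin r → Prop := fun i => ∃ (f : ZMod n → K) (g : ZMod n → ZMod n → K),
      T i = fun x y z => f x * g y z with hP
  set R : Fin r → Prop := fun i => ∃ (f : ZMod n → K) (g : ZMod n → ZMod n → K),
      T i = fun x y z => f y * g x z with hR
  -- chosen data for P-slices
  have fA : ∀ i, P i → ∃ (f : ZMod n → K) (g : ZMod n → ZMod n → K),
      T i = fun x y z => f x * g y z := fun i hi => hi
  set bc : ℕ := (Finset.univ.filter fun i : Fin r => ¬ P i).card with hbc
  set a : ℕ := (Finset.univ.filter fun i : Fin r => P i).card with ha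
  have hab : a + bc = r := by
    rw [ha, hbc, Finset.card_filter_add_card_filter_not]
    simp
  have hbcr : bc ≤ r := by omega
  have hbcn : bc < n := lt_of_le_of_lt hbcr hr
  -- choice functions
  have hPex : ∀ i, P i → ∃ (f : ZMod n → K) (g : ZMod n → ZMod n → K),
      T i = fun x y z => f x * g y z := fun i hi => hi
  choose fP gP hfP using hPex
  have hRex : ∀ i, ¬ P i → R i → ∃ (f : ZMod n → K) (g : ZMod n → ZMod n → K),
      T i = fun x y z => f y * g x z := fun i _ hi => hi
  choose fY gY hfY using hRex
  have hZex : ∀ i, ¬ P i → ¬ R i → ∃ (f : ZMod n → K) (g : ZMod n → ZMod n → K),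
      T i = fun x y z => f z * g x y := by
    intro i h1 h2
    rcases hT i with h | h | h
    · exact absurd h h1
    · exact absurd h h2
    · exact h
  choose fZ gZ hfZ using hZex
  -- index equivalence for non-P slices
  have hcard : Fintype.card {i : Fin r // ¬ P i} = bc := by
    rw [Fintype.card_subtype]
  let e : {i : Fin r // ¬ P i} ≃ Fin bc := Fintype.equivFinOfCardEq hcard
  -- the linear constraints
  let Φ : (ZMod n → K) →ₗ[K] (Fin r → K) :=
    { toFun := fun v i => if h : P i then ∑ x, v x * fP i h x
        else v (((n - bc) + ((e ⟨i, h⟩ : Fin bc) : ℕ) : ℕ) : ZMod n)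
      map_add' := by
        intro v w; funext i
        by_cases h : P i <;> simp [h, add_mul, Finset.sum_add_distrib]
      map_smul' := by
        intro c v; funext i
        by_cases h : P i <;> simp [h, Finset.mul_sum, mul_assoc]}
  obtain ⟨v, hvker, hv0⟩ : ∃ v, v ∈ LinearMap.ker Φ ∧ v ≠ 0 := by
    have h1 : finrank K (ZMod n → K) = n := by
      rw [Module.finrank_pi, ZMod.card]
    have h2 := LinearMap.finrank_range_add_finrank_ker Φ
    have h3 : finrank K ↥(LinearMap.range Φ) ≤ r :=
      le_trans (Submodule.finrank_le _) (by rw [Module.finrank_pi, Fintype.card_fin])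
    have h4 : LinearMap.ker Φ ≠ ⊥ := by
      intro hbot
      rw [hbot] at h2
      rw [h1, finrank_bot] at h2
      omega
    exact Submodule.exists_mem_ne_zero_of_ne_bot h4
  have hΦ : Φ v = 0 := hvker
  have hv1 : ∀ i (h : P i), ∑ x, v x * fP i h x = 0 := by
    intro i h
    have h0 := congrFun hΦ i
    simpa [Φ, dif_pos h] using h0
  have hv2 : ∀ x : ZMod n, n - bc ≤ x.val → v x = 0 := by
    intro x hx
    have hxlt := ZMod.val_lt x
    have htlt : x.val - (n - bc) < bc := by omega
    set i : {i : Fin r // ¬ P i} := e.symm ⟨x.val - (n - bc), htlt⟩ with hi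
    have hei : e i = ⟨x.val - (n - bc), htlt⟩ := by simp [hi]
    have h0 := congrFun hΦ i.1
    have h0' : v (((n - bc) + ((e ⟨i.1, i.2⟩ : Fin bc) : ℕ) : ℕ) : ZMod n) = 0 := by
      simpa [Φ, dif_neg i.2] using h0
    rw [show (⟨i.1, i.2⟩ : {i : Fin r // ¬ P i}) = i from rfl, hei] at h0'
    have harith : (n - bc) + (x.val - (n - bc)) = x.val := by omega
    rw [show ((⟨x.val - (n - bc), htlt⟩ : Fin bc) : ℕ) = x.val - (n - bc) from rfl,
      harith, ZMod.natCast_rightInverse x] at h0'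
    exact h0'
  -- the top of the support of v
  have hsupp : (Finset.univ.filter fun x : ZMod n => v x ≠ 0).Nonempty := by
    by_contra hcon
    rw [Finset.not_nonempty_iff_eq_empty, Finset.filter_eq_empty_iff] at hcon
    exact hv0 (funext fun x => by simpa using hcon (Finset.mem_univ x))
  set d : ℕ := ((Finset.univ.filter fun x : ZMod n => v x ≠ 0).image ZMod.val).max'
    (hsupp.image _) with hd
  have hd1 : ∃ x : ZMod n, v x ≠ 0 ∧ x.val = d := by
    have hmem := Finset.max'_mem _ (hsupp.image ZMod.val)
    rw [Finset.mem_image] at hmem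
    obtain ⟨x, hx1, hx2⟩ := hmem
    rw [Finset.mem_filter] at hx1
    exact ⟨x, hx1.2, hx2⟩
  have hd2 : ∀ x : ZMod n, v x ≠ 0 → x.val ≤ d := fun x hx =>
    Finset.le_max' _ _ (Finset.mem_image.mpr ⟨x, Finset.mem_filter.mpr ⟨Finset.mem_univ x, hx⟩, rfl⟩)
  have hdn : d + bc < n := by
    obtain ⟨x, hx, hxd⟩ := hd1
    have hxv := ZMod.val_lt x
    have : ¬ (n - bc ≤ x.val) := fun hc => hx (hv2 x hc)
    omega
  have hvd : v ((d : ℕ) : ZMod n) ≠ 0 := by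
    obtain ⟨x, hx, hxd⟩ := hd1
    have hxx : ((d : ℕ) : ZMod n) = x := by rw [← hxd]; exact ZMod.natCast_rightInverse x
    rwa [hxx]
  have hvgt : ∀ m : ℕ, d < m → m < n → v ((m : ℕ) : ZMod n) = 0 := by
    intro m h1 h2
    by_contra hc
    have := hd2 _ hc
    rw [ZMod.val_cast_of_lt h2] at this
    omega
  -- span generators and coefficients
  set u : {i : Fin r // ¬ P i} → (ZMod n → K) := fun i =>
    if h : R i.1 then (fun z => ∑ x, v x * gY i.1 i.2 h x z) else fZ i.1 i.2 h with hu
  set cf : {i : Fin r // ¬ P i} → ZMod n → K := fun i y =>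
    if h : R i.1 then fY i.1 i.2 h y else ∑ x, v x * gZ i.1 i.2 h x y with hcf
  -- the row identity
  have hrow : ∀ y z : ZMod n, v (z - y) = ∑ i : {i : Fin r // ¬ P i}, cf i y * u i z := by
    intro y z
    have h1 : ∑ x : ZMod n, v x * (if x + y = z then (1:K) else 0) = v (z - y) := by
      rw [Finset.sum_eq_single (z - y)]
      · simp [sub_add_cancel]
      · intro x _ hx
        have hne : ¬ (x + y = z) := fun hc => hx (by rw [← hc]; ring)
        simp [hne]
      · simp
    have h2 : ∀ i ∈ Finset.univ.filter (fun i : Fin r => P i),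
        ∑ x : ZMod n, v x * T i x y z = 0 := by
      intro i hi
      rw [Finset.mem_filter] at hi
      have hPi := hi.2
      have : ∀ x, T i x y z = fP i hPi x * gP i hPi y z := fun x => by rw [hfP i hPi]
      calc ∑ x : ZMod n, v x * T i x y z
          = (∑ x : ZMod n, v x * fP i hPi x) * gP i hPi y z := by
            rw [Finset.sum_mul]
            exact Finset.sum_congr rfl fun x _ => by rw [this x]; ring
        _ = 0 := by rw [hv1 i hPi, zero_mul]
    calc v (z - y) = ∑ x : ZMod n, v x * (if x + y = z then (1:K) else 0) := h1.symm
      _ = ∑ x : ZMod n, v x * ∑ i, T i x y z := by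
          exact Finset.sum_congr rfl fun x _ => by rw [← hsum x y z]
      _ = ∑ x : ZMod n, ∑ i, v x * T i x y z := by
          exact Finset.sum_congr rfl fun x _ => Finset.mul_sum _ _ _
      _ = ∑ i : Fin r, ∑ x : ZMod n, v x * T i x y z := Finset.sum_comm
      _ = ∑ i ∈ Finset.univ.filter (fun i : Fin r => P i), ∑ x : ZMod n, v x * T i x y z
          + ∑ i ∈ Finset.univ.filter (fun i : Fin r => ¬ P i), ∑ x : ZMod n, v x * T i x y z := by
          rw [Finset.sum_filter_add_sum_filter_not]
      _ = ∑ i ∈ Finset.univ.filter (fun i : Fin r => ¬ P i), ∑ x : ZMod n, v x * T i x y z := by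
          rw [Finset.sum_eq_zero h2, zero_add]
      _ = ∑ i : {i : Fin r // ¬ P i}, ∑ x : ZMod n, v x * T i.1 x y z := by
          rw [Finset.sum_subtype (p := fun i : Fin r => ¬ P i)
            (Finset.univ.filter (fun i : Fin r => ¬ P i))
            (fun i => by simp) (fun i => ∑ x : ZMod n, v x * T i x y z)]
      _ = ∑ i : {i : Fin r // ¬ P i}, cf i y * u i z := by
          refine Finset.sum_congr rfl fun i _ => ?_
          by_cases h : R i.1
          · have hT' : ∀ x, T i.1 x y z = fY i.1 i.2 h y * gY i.1 i.2 h x z :=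
              fun x => by rw [hfY i.1 i.2 h]
            rw [hcf, hu]
            simp only [dif_pos h]
            rw [Finset.mul_sum]
            exact Finset.sum_congr rfl fun x _ => by rw [hT' x]; ring
          · have hT' : ∀ x, T i.1 x y z = fZ i.1 i.2 h z * gZ i.1 i.2 h x y :=
              fun x => by rw [hfZ i.1 i.2 h]
            rw [hcf, hu]
            simp only [dif_neg h]
            rw [Finset.sum_mul]
            exact Finset.sum_congr rfl fun x _ => by rw [hT' x]; ring
  -- the shifted rows
  set w : Fin (bc + 1) → (ZMod n → K) := fun k z => v (z - ((k : ℕ) : ZMod n)) with hw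
  have hwmem : ∀ k, w k ∈ Submodule.span K (Set.range u) := by
    intro k
    have hwk : w k = ∑ i : {i : Fin r // ¬ P i}, cf i ((k : ℕ) : ZMod n) • u i := by
      funext z
      rw [hw]
      simp only [Finset.sum_apply, Pi.smul_apply, smul_eq_mul]
      exact hrow _ z
    rw [hwk]
    exact Submodule.sum_smul_mem _ _ fun i _ => Submodule.subset_span ⟨i, rfl⟩
  -- the shifted rows are linearly independent
  have hli : LinearIndependent K w := by
    rw [Fintype.linearIndependent_iff]
    intro g hg
    by_contra hcon
    push_neg at hcon
    obtain ⟨j0, hj0⟩ := hcon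
    have hne : (Finset.univ.filter fun k : Fin (bc+1) => g k ≠ 0).Nonempty :=
      ⟨j0, by simp [hj0]⟩
    set j := Finset.max' _ hne with hj
    have hgj : g j ≠ 0 := by
      have := Finset.max'_mem _ hne
      rw [Finset.mem_filter] at this
      exact this.2
    have hmax : ∀ k, g k ≠ 0 → k ≤ j := fun k hk =>
      Finset.le_max' _ _ (Finset.mem_filter.mpr ⟨Finset.mem_univ k, hk⟩)
    have hjbc : (j : ℕ) ≤ bc := Nat.lt_succ_iff.mp j.2
    have hev := congrFun hg ((d + (j : ℕ) : ℕ) : ZMod n)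
    have hev' : ∑ k : Fin (bc+1),
        g k * v (((d + (j : ℕ) : ℕ) : ZMod n) - ((k : ℕ) : ZMod n)) = 0 := by
      simpa [hw, Finset.sum_apply] using hev
    rw [Finset.sum_eq_single j] at hev'
    · have harg : ((d + (j : ℕ) : ℕ) : ZMod n) - ((j : ℕ) : ZMod n) = ((d : ℕ) : ZMod n) := by
        push_cast
        ring
      rw [harg] at hev'
      exact hgj ((mul_eq_zero.mp hev').resolve_right hvd)
    · intro k _ hkj
      rcases lt_or_gt_of_ne hkj with hlt | hgt
      · -- k < j : the v-factor vanishes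
        have hkle : (k : ℕ) ≤ d + (j : ℕ) := by omega
        have harg : ((d + (j : ℕ) : ℕ) : ZMod n) - ((k : ℕ) : ZMod n)
            = ((d + (j : ℕ) - (k : ℕ) : ℕ) : ZMod n) := by
          rw [Nat.cast_sub hkle]
        have hklt : (k : ℕ) < (j : ℕ) := hlt
        rw [harg, hvgt (d + (j : ℕ) - (k : ℕ)) (by omega) (by omega), mul_zero]
      · -- j < k : the g-factor vanishes
        have : g k = 0 := by
          by_contra hc
          exact absurd (hmax k hc) (not_le.mpr hgt)
        rw [this, zero_mul]
    · intro hj'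
      exact absurd (Finset.mem_univ j) hj'
  -- dimension contradiction
  have hfin1 : bc + 1 ≤ finrank K ↥(Submodule.span K (Set.range u)) := by
    have h2 : finrank K ↥(Submodule.span K (Set.range w)) = bc + 1 := by
      rw [finrank_span_eq_card hli, Fintype.card_fin]
    have h3 : Submodule.span K (Set.range w) ≤ Submodule.span K (Set.range u) := by
      rw [Submodule.span_le]
      rintro _ ⟨k, rfl⟩
      exact hwmem k
    rw [← h2]
    exact Submodule.finrank_mono h3
  have hfin2 : finrank K ↥(Submodule.span K (Set.range u)) ≤ bc := by
    refine le_trans (finrank_span_le_card _) ?_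
    rw [Set.toFinset_range]
    refine le_trans Finset.card_image_le ?_
    rw [Finset.card_univ, hcard]
  omega


/-- For any cyclic group `Z/nZ` (`n ≥ 1`, written additively) and any field
`F`, the slice rank of the multiplication tensor of the group equals `n`. -/
theorem sliceRank_cyclic {K : Type*} [Field K] (n : ℕ) [NeZero n] :
    sliceRank K (fun g h k : ZMod n => if g + h = k then (1 : K) else 0) = n := by
  have hmem : n ∈ {r | HasSliceRankLE K (fun g h k : ZMod n => if g + h = k then (1 : K) else 0) r} :=
    upper_aux n
  refine le_antisymm (Nat.sInf_le hmem) (le_csInf ⟨n, hmem⟩ ?_)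
  intro m hm
  by_contra hmn
  exact lower_aux n m (by omega) hm
end
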